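/- arXiv:1109.0522 — 8 statements merged into one kernel-verified Lean document; each statement's English description precedes it below -/
import Mathlib

section
/- For k ≥ 1 and d ≥ 3, |L^(k)(S_d)| < d^k · 2^{k²/2}. -/
/-- A finite simple graph, bundled with its (finite) vertex type. -/
structure FGraph where
  V : Type
  [fin : Fintype V]
  G : SimpleGraph V

attribute [instance] FGraph.fin

/-- The line graph of a bundled finite graph. -/
noncomputable def FGraph.line (H : FGraph) : FGraph :=
  letI : Fintype H.G.edgeSet := Fintype.ofFinite _
  FGraph.mk H.G.edgeSet H.G.lineGraph

/-- The `k`-th iterated line graph. -/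
noncomputable def lineIter : ℕ → FGraph → FGraph
  | 0, H => H
  | (k + 1), H => (lineIter k H).line

/-- The star `S_d`: vertex `0` is the center, joined to `d` leaves. -/
def starGraph (d : ℕ) : SimpleGraph (Fin (d + 1)) :=
  SimpleGraph.fromRel (fun u _ => u = 0)

/-- The star `S_d`, as a bundled finite graph. -/
def starFG (d : ℕ) : FGraph := FGraph.mk (Fin (d + 1)) (starGraph d)

section Aux
open SimpleGraph

lemma aux_two_card_edge_le (H : FGraph) (D : ℕ)
    (hD : ∀ v, Nat.card (H.G.neighborSet v) ≤ D) :
    2 * Nat.card H.G.edgeSet ≤ Nat.card H.V * D := by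
  classical
  have hsum : ∑ v, H.G.degree v = 2 * H.G.edgeFinset.card :=
    H.G.sum_degrees_eq_twice_card_edges
  have hcard : Nat.card H.G.edgeSet = H.G.edgeFinset.card := by
    rw [Nat.card_eq_fintype_card]
    exact (edgeFinset_card (G := H.G)).symm
  have hdeg : ∀ v, H.G.degree v ≤ D := by
    intro v
    have := hD v
    rwa [Nat.card_eq_fintype_card, card_neighborSet_eq_degree] at this
  calc 2 * Nat.card H.G.edgeSet = ∑ v, H.G.degree v := by rw [hcard, hsum]
    _ ≤ ∑ _v : H.V, D := Finset.sum_le_sum fun v _ => hdeg v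
    _ = Nat.card H.V * D := by
        rw [Finset.sum_const, Finset.card_univ, Nat.card_eq_fintype_card, smul_eq_mul]

lemma aux_line_deg_le (H : FGraph) (D : ℕ)
    (hD : ∀ v, Nat.card (H.G.neighborSet v) ≤ D)
    (e : H.G.edgeSet) :
    Nat.card (H.line.G.neighborSet e) ≤ 2 * D := by
  classical
  have hu0 : ((e : Sym2 H.V)).out.1 ∈ (e : Sym2 H.V) := Sym2.out_fst_mem _
  set u := ((e : Sym2 H.V)).out.1 with hudef
  obtain ⟨v, huv⟩ := Sym2.mem_iff_exists.mp hu0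
  have toE : H.line.V → H.G.edgeSet := fun x => x
  have key : ∀ f : H.line.G.neighborSet e,
      (u ∈ f.1.1) ∨ (v ∈ f.1.1) := by
    rintro ⟨f, hf⟩
    have hadj : H.G.lineGraph.Adj e f := hf
    obtain ⟨-, w, hw1, hw2⟩ := lineGraph_adj_iff_exists.mp hadj
    rw [huv, Sym2.mem_iff] at hw1
    rcases hw1 with rfl | rfl
    · exact Or.inl hw2
    · exact Or.inr hw2
  have memE : ∀ f : H.line.G.neighborSet e,
      f.1.1 ∈ H.G.edgeSet :=
    fun f => f.1.2
  set F : H.line.G.neighborSet e → (H.G.neighborSet u ⊕ H.G.neighborSet v) := fun f =>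
    if hu : u ∈ f.1.1 then
      Sum.inl ⟨Sym2.Mem.other hu, by
        have hmem := memE f
        rw [← Sym2.other_spec hu] at hmem
        exact hmem⟩
    else
      Sum.inr ⟨Sym2.Mem.other ((key f).resolve_left hu), by
        have hmem := memE f
        rw [← Sym2.other_spec ((key f).resolve_left hu)] at hmem
        exact hmem⟩ with hF
  have hinj : Function.Injective F := by
    intro f g hfg
    simp only [hF] at hfg
    split_ifs at hfg with h1 h2 h2 <;>
      simp only [Sum.inl.injEq, Sum.inr.injEq, Subtype.mk.injEq] at hfg
    · have : f.1.1
          = g.1.1 := by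
        rw [← Sym2.other_spec h1, ← Sym2.other_spec h2, Subtype.mk.inj hfg]
      exact Subtype.ext (Subtype.ext this)
    · have : f.1.1
          = g.1.1 := by
        rw [← Sym2.other_spec ((key f).resolve_left h1),
          ← Sym2.other_spec ((key g).resolve_left h2), Subtype.mk.inj hfg]
      exact Subtype.ext (Subtype.ext this)
  calc Nat.card (H.line.G.neighborSet e)
      ≤ Nat.card (H.G.neighborSet u ⊕ H.G.neighborSet v) :=
        Nat.card_le_card_of_injective F hinj
    _ = Nat.card (H.G.neighborSet u) + Nat.card (H.G.neighborSet v) := Nat.card_sum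
    _ ≤ D + D := Nat.add_le_add (hD u) (hD v)
    _ = 2 * D := (two_mul D).symm

lemma aux_card_ne (d : ℕ) (a : Fin (d + 1)) : Nat.card {i : Fin (d + 1) // i ≠ a} = d := by
  simp [Nat.card_eq_fintype_card]

lemma star_deg_le (d : ℕ) : ∀ v, Nat.card ((starFG d).G.neighborSet v) ≤ d := by
  intro v
  have hinj : Function.Injective
      (fun w : (starFG d).G.neighborSet v => (⟨w.1, (show (starFG d).G.Adj v w.1 from w.2).ne'⟩ : {i : Fin (d+1) // i ≠ v})) := by
    intro a b hab
    simp only [Subtype.mk.injEq] at hab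
    exact Subtype.ext (Subtype.mk.inj hab)
  have := Nat.card_le_card_of_injective _ hinj
  exact this.trans (aux_card_ne d v).le

lemma star_mem_zero (d : ℕ) (e : Sym2 (Fin (d + 1))) (he : e ∈ (_root_.starGraph d).edgeSet) :
    (0 : Fin (d + 1)) ∈ e := by
  induction e using Sym2.ind with
  | _ a b =>
    rw [SimpleGraph.mem_edgeSet] at he
    rw [_root_.starGraph, SimpleGraph.fromRel_adj] at he
    rw [Sym2.mem_iff]
    rcases he.2 with h | h
    · exact Or.inl h.symm
    · exact Or.inr h.symm

lemma star_edges_le (d : ℕ) : Nat.card (_root_.starGraph d).edgeSet ≤ d := by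
  classical
  have hadj : ∀ e : (_root_.starGraph d).edgeSet,
      (_root_.starGraph d).Adj 0 (Sym2.Mem.other (star_mem_zero d e.1 e.2)) := by
    intro e
    have h := e.2
    rw [← Sym2.other_spec (star_mem_zero d e.1 e.2)] at h
    exact h
  have hinj : Function.Injective (fun e : (_root_.starGraph d).edgeSet =>
      (⟨Sym2.Mem.other (star_mem_zero d e.1 e.2), (hadj e).ne'⟩ : {i : Fin (d+1) // i ≠ 0})) := by
    intro a b hab
    simp only [Subtype.mk.injEq] at hab
    apply Subtype.ext
    rw [← Sym2.other_spec (star_mem_zero d a.1 a.2),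
      ← Sym2.other_spec (star_mem_zero d b.1 b.2), hab]
  have := Nat.card_le_card_of_injective _ hinj
  rwa [aux_card_ne] at this

lemma iter_deg_le (d : ℕ) : ∀ k, ∀ v, Nat.card ((lineIter k (starFG d)).G.neighborSet v)
    ≤ 2 ^ k * d := by
  intro k
  induction k with
  | zero => intro v; rw [pow_zero, one_mul]; exact star_deg_le d v
  | succ n ih =>
    intro v
    have h := aux_line_deg_le (lineIter n (starFG d)) (2 ^ n * d) ih v
    calc Nat.card ((lineIter (n+1) (starFG d)).G.neighborSet v) ≤ 2 * (2 ^ n * d) := h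
      _ = 2 ^ (n + 1) * d := by ring

lemma two_mul_choose_two (m : ℕ) : 2 * Nat.choose m 2 = m * (m - 1) := by
  induction m with
  | zero => simp
  | succ p ih =>
    rw [Nat.choose_succ_succ, Nat.choose_one_right, Nat.mul_add, ih]
    cases p with
    | zero => simp
    | succ q => simp only [Nat.add_sub_cancel]; ring

lemma iter_card_le (d : ℕ) : ∀ k, 1 ≤ k →
    Nat.card (lineIter k (starFG d)).V ≤ d ^ k * 2 ^ (Nat.choose (k - 1) 2) := by
  intro k
  induction k with
  | zero => omega
  | succ n ih =>
    intro _
    cases Nat.eq_zero_or_pos n with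
    | inl h0 =>
      subst h0
      have : Nat.card (lineIter 1 (starFG d)).V ≤ d := star_edges_le d
      simpa using this
    | inr hn =>
      have h1 := ih hn
      have h2 : 2 * Nat.card (lineIter (n + 1) (starFG d)).V
          ≤ Nat.card (lineIter n (starFG d)).V * (2 ^ n * d) :=
        aux_two_card_edge_le (lineIter n (starFG d)) (2 ^ n * d) (iter_deg_le d n)
      have h3 : Nat.card (lineIter (n + 1) (starFG d)).V
          ≤ Nat.card (lineIter n (starFG d)).V * (2 ^ (n - 1) * d) := by
        apply Nat.le_of_mul_le_mul_left _ (show 0 < 2 by norm_num)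
        calc 2 * Nat.card (lineIter (n + 1) (starFG d)).V
            ≤ Nat.card (lineIter n (starFG d)).V * (2 ^ n * d) := h2
          _ = 2 * (Nat.card (lineIter n (starFG d)).V * (2 ^ (n - 1) * d)) := by
              obtain ⟨m, rfl⟩ := Nat.exists_eq_add_of_le hn
              simp only [Nat.add_sub_cancel_left, Nat.add_sub_cancel]
              rw [pow_add]
              ring
      have hch : Nat.choose n 2 = Nat.choose (n - 1) 2 + (n - 1) := by
        obtain ⟨m, rfl⟩ := Nat.exists_eq_add_of_le hn
        simp only [Nat.add_sub_cancel_left, Nat.add_sub_cancel]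
        rw [Nat.add_comm 1 m, Nat.choose_succ_succ, Nat.choose_one_right, Nat.add_comm]
      calc Nat.card (lineIter (n + 1) (starFG d)).V
          ≤ Nat.card (lineIter n (starFG d)).V * (2 ^ (n - 1) * d) := h3
        _ ≤ (d ^ n * 2 ^ (Nat.choose (n - 1) 2)) * (2 ^ (n - 1) * d) :=
            Nat.mul_le_mul_right _ h1
        _ = d ^ (n + 1) * 2 ^ (Nat.choose (n - 1) 2 + (n - 1)) := by
            rw [pow_succ, pow_add]; ring
        _ = d ^ (n + 1) * 2 ^ (Nat.choose ((n + 1) - 1) 2) := by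
            rw [Nat.add_sub_cancel, hch]

end Aux

/-- For `k ≥ 1` and `d ≥ 3`, `|L^(k)(S_d)| < d^k * 2^(k²/2)`. -/
theorem card_lineIter_star_lt (d k : ℕ) (hk : 1 ≤ k) (hd : 3 ≤ d) :
    (Nat.card (lineIter k (starFG d)).V : ℝ) <
      (d : ℝ) ^ k * (2 : ℝ) ^ (((k : ℝ) ^ 2) / 2) := by
  have key := iter_card_le d k hk
  set c := Nat.choose (k - 1) 2 with hc
  have hcnat : 2 * c < k ^ 2 := by
    rw [hc, two_mul_choose_two]
    obtain ⟨m, rfl⟩ := Nat.exists_eq_add_of_le hk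
    simp only [Nat.add_sub_cancel_left, Nat.add_sub_cancel]
    calc m * (m - 1) ≤ m * m := Nat.mul_le_mul_left m (Nat.sub_le m 1)
      _ < (1 + m) ^ 2 := by nlinarith
  have hcr : (c : ℝ) < (k : ℝ) ^ 2 / 2 := by
    have : (2 * c : ℝ) < ((k : ℝ)) ^ 2 := by exact_mod_cast hcnat
    linarith
  have hd0 : (0 : ℝ) < (d : ℝ) ^ k := by positivity
  calc (Nat.card (lineIter k (starFG d)).V : ℝ) ≤ (d : ℝ) ^ k * (2 : ℝ) ^ c := by
        exact_mod_cast key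
    _ < (d : ℝ) ^ k * (2 : ℝ) ^ (((k : ℝ) ^ 2) / 2) := by
        apply mul_lt_mul_of_pos_left _ hd0
        rw [← Real.rpow_natCast 2 c]
        exact (Real.rpow_lt_rpow_left_iff one_lt_two).mpr hcr
end

section
/- For every integer t ≥ 1 and every 1 ≤ r ≤ t, the coefficient of n^r in the polynomial binomial(n, t) = n(n−1)⋯(n−t+1)/t! has absolute value at most 2^t / t. -/
open Polynomial

/-- Every coefficient of `n^r` (for `1 ≤ r ≤ t`) in the polynomial
`binomial(n, t) = n(n-1)⋯(n-t+1)/t!` has absolute value at most `2^t / t`. -/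
theorem coeff_binomial_poly_bound (t : ℕ) (ht : 1 ≤ t) :
    ∀ r : ℕ, 1 ≤ r → r ≤ t →
      |(((t.factorial : ℚ)⁻¹ • ∏ i ∈ Finset.range t, ((X : ℚ[X]) - C (i : ℚ))).coeff r)| ≤
        (2 : ℚ) ^ t / (t : ℚ) := by
  intro r hr1 hrt
  have hcard : (r : ℕ) ≤ (Finset.range t).card := by simpa using hrt
  -- rewrite X - C i as X + C (-i) and apply Vieta
  have hcoeff : (∏ i ∈ Finset.range t, ((X : ℚ[X]) - C (i : ℚ))).coeff r =
      ∑ s ∈ (Finset.range t).powersetCard ((Finset.range t).card - r),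
        ∏ i ∈ s, (-(i : ℚ)) := by
    have := Finset.prod_X_add_C_coeff (Finset.range t) (fun i => (-(i : ℚ))) hcard
    simp only [map_neg, ← sub_eq_add_neg] at this
    exact this
  have habs : |(∏ i ∈ Finset.range t, ((X : ℚ[X]) - C (i : ℚ))).coeff r| ≤
      (t.factorial : ℚ) := by
    rw [hcoeff]
    calc |∑ s ∈ (Finset.range t).powersetCard ((Finset.range t).card - r),
            ∏ i ∈ s, (-(i : ℚ))|
        ≤ ∑ s ∈ (Finset.range t).powersetCard ((Finset.range t).card - r),
            |∏ i ∈ s, (-(i : ℚ))| := Finset.abs_sum_le_sum_abs _ _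
      _ = ∑ s ∈ (Finset.range t).powersetCard ((Finset.range t).card - r),
            ∏ i ∈ s, (i : ℚ) := by
            refine Finset.sum_congr rfl fun s hs => ?_
            rw [Finset.abs_prod]
            refine Finset.prod_congr rfl fun i _ => ?_
            rw [abs_neg, abs_of_nonneg (by positivity)]
      _ ≤ ∑ s ∈ (Finset.range t).powerset, ∏ i ∈ s, (i : ℚ) := by
            refine Finset.sum_le_sum_of_subset_of_nonneg ?_ ?_
            · intro s hs
              rw [Finset.mem_powersetCard] at hs
              exact Finset.mem_powerset.mpr hs.1
            · intro s _ _
              exact Finset.prod_nonneg fun i _ => by positivity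
      _ = ∏ i ∈ Finset.range t, ((i : ℚ) + 1) := by
            rw [Finset.prod_add]
            refine Finset.sum_congr rfl fun s _ => ?_
            simp
      _ = (t.factorial : ℚ) := by
            have : ∀ n : ℕ, ∏ i ∈ Finset.range n, ((i : ℚ) + 1) = (n.factorial : ℚ) := by
              intro n
              induction n with
              | zero => simp
              | succ m ih =>
                rw [Finset.prod_range_succ, ih, Nat.factorial_succ]
                push_cast; ring
            exact this t
  have htpos : (0 : ℚ) < t := by exact_mod_cast ht
  have hfac : (0 : ℚ) < (t.factorial : ℚ) := by exact_mod_cast t.factorial_pos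
  rw [Polynomial.coeff_smul, smul_eq_mul, abs_mul, abs_inv, abs_of_pos hfac]
  calc (t.factorial : ℚ)⁻¹ * |(∏ i ∈ Finset.range t, ((X : ℚ[X]) - C (i : ℚ))).coeff r|
      ≤ (t.factorial : ℚ)⁻¹ * (t.factorial : ℚ) := by
        exact mul_le_mul_of_nonneg_left habs (by positivity)
    _ = 1 := inv_mul_cancel₀ hfac.ne'
    _ ≤ (2 : ℚ) ^ t / (t : ℚ) := by
        rw [le_div_iff₀ htpos, one_mul]
        exact_mod_cast (Nat.lt_two_pow_self (n := t)).le
end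

section
/- The number of paths of length at most k in the line-graph iteration tree is bounded: for any graph H and any vertex v of L^(k)(H), the shadow of v contains at most k+1 vertices of H, i.e., |Sh(v)| ≤ k + 1. -/
/-- The shadow of a vertex of the `k`-th iterated line graph: the set of vertices of the
base graph appearing at the leaves of the recursive pair structure. -/
def Sh : (k : ℕ) → (H : FGraph) → (lineIter k H).V → Set H.V
  | 0, _, v => {v}
  | (k + 1), H, v =>
      {x | ∃ A : (lineIter k H).V,
        A ∈ ((show (lineIter k H).G.edgeSet from v : _) : Sym2 (lineIter k H).V) ∧ x ∈ Sh k H A}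

def toEdge {H : FGraph} {k : ℕ} (v : (lineIter (k+1) H).V) : (lineIter k H).G.edgeSet := v

lemma sh_succ (H : FGraph) (k : ℕ) (v : (lineIter (k+1) H).V) :
    Sh (k+1) H v = {x | ∃ A : (lineIter k H).V, A ∈ (toEdge v : Sym2 _) ∧ x ∈ Sh k H A} := rfl

lemma adj_line {H : FGraph} {k : ℕ} {a b : (lineIter (k+1) H).V}
    (h : (lineIter (k+1) H).G.Adj a b) :
    (lineIter k H).G.lineGraph.Adj (toEdge a) (toEdge b) := h

lemma adj_of_pair {H : FGraph} {k : ℕ} {a : (lineIter (k+1) H).V}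
    {x y : (lineIter k H).V} (hspec : s(x, y) = (toEdge a : Sym2 _)) :
    (lineIter k H).G.Adj x y := by
  have he : ((toEdge a : Sym2 _)) ∈ (lineIter k H).G.edgeSet := (toEdge a).2
  rw [← hspec] at he
  exact he

lemma lift_walk (H : FGraph) (k : ℕ) :
    ∀ {a b : (lineIter (k+1) H).V} (w : (lineIter (k+1) H).G.Walk a b)
      (x : (lineIter k H).V), x ∈ (toEdge a : Sym2 _) →
    ∃ (c : (lineIter k H).V) (w' : (lineIter k H).G.Walk x c),
      {u | u ∈ w'.support} = {u | ∃ e ∈ w.support, u ∈ (toEdge e : Sym2 _)} ∧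
      {u | u ∈ w'.support}.ncard ≤ {e | e ∈ w.support}.ncard + 1 := by
  intro a b w
  induction w with
  | nil =>
    rename_i a
    intro x hx
    obtain ⟨y, hspec⟩ : ∃ y, s(x, y) = (toEdge a : Sym2 _) :=
      ⟨Sym2.Mem.other hx, Sym2.other_spec hx⟩
    have hadj := adj_of_pair hspec
    refine ⟨y, .cons hadj .nil, ?_, ?_⟩
    · ext u
      simp only [SimpleGraph.Walk.support_cons, SimpleGraph.Walk.support_nil,
        List.mem_cons, List.not_mem_nil, or_false, Set.mem_setOf_eq, List.mem_singleton]
      constructor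
      · rintro (rfl | rfl)
        · exact ⟨a, rfl, by rw [← hspec]; simp⟩
        · exact ⟨a, rfl, by rw [← hspec]; simp⟩
      · rintro ⟨e, rfl, h⟩
        rw [← hspec] at h; simpa using h
    · have h1 : {u | u ∈ (SimpleGraph.Walk.cons hadj .nil).support} = {x, y} := by
        ext u; simp [SimpleGraph.Walk.support_cons]
      rw [h1]
      have h2 : ({x, y} : Set _).ncard ≤ 2 := by
        calc ({x, y} : Set _).ncard ≤ ({y} : Set _).ncard + 1 := Set.ncard_insert_le _ _
          _ ≤ 2 := by simp
      have h3 : {e | e ∈ (SimpleGraph.Walk.nil : (lineIter (k+1) H).G.Walk a a).support}.ncard = 1 := by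
        have : {e | e ∈ (SimpleGraph.Walk.nil : (lineIter (k+1) H).G.Walk a a).support} = {a} := by
          ext u; simp
        rw [this]; simp
      omega
  | cons h w ih =>
    rename_i a b c
    intro x hx
    obtain ⟨hne, z, hza, hzb⟩ := (SimpleGraph.lineGraph_adj_iff_exists.mp (adj_line h))
    obtain ⟨y, hspec⟩ : ∃ y, s(x, y) = (toEdge a : Sym2 _) :=
      ⟨Sym2.Mem.other hx, Sym2.other_spec hx⟩
    have hadj := adj_of_pair hspec
    obtain ⟨c', w'', hset, hcard⟩ := ih z hzb
    have hz : z = x ∨ z = y := by rw [← hspec] at hza; simpa using hza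
    have htarget : {u | ∃ e ∈ (SimpleGraph.Walk.cons h w).support, u ∈ (toEdge e : Sym2 _)}
        = {u | u = x ∨ u = y ∨ u ∈ w''.support} := by
      ext u
      simp only [Set.mem_setOf_eq, SimpleGraph.Walk.support_cons, List.mem_cons]
      constructor
      · rintro ⟨e, (rfl | he), hu⟩
        · rw [← hspec] at hu
          have : u = x ∨ u = y := by simpa using hu
          tauto
        · have : u ∈ {u | u ∈ w''.support} := by rw [hset]; exact ⟨e, he, hu⟩
          exact Or.inr (Or.inr this)
      · rintro (rfl | rfl | hu)
        · exact ⟨a, Or.inl rfl, by rw [← hspec]; simp⟩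
        · exact ⟨a, Or.inl rfl, by rw [← hspec]; simp⟩
        · have : u ∈ {u | ∃ e ∈ w.support, u ∈ (toEdge e : Sym2 _)} := by rw [← hset]; exact hu
          obtain ⟨e, he, hu⟩ := this
          exact ⟨e, Or.inr he, hu⟩
    have hzmem : z ∈ w''.support := w''.start_mem_support
    have hRHS : {e | e ∈ (SimpleGraph.Walk.cons h w).support}.ncard + 1
        ≥ {e | e ∈ w.support}.ncard + 2 ∨
        (a ∈ w.support ∧ {e | e ∈ (SimpleGraph.Walk.cons h w).support}.ncard
          = {e | e ∈ w.support}.ncard) := by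
      have hcons : {e | e ∈ (SimpleGraph.Walk.cons h w).support}
          = insert a {e | e ∈ w.support} := by
        ext e; simp [SimpleGraph.Walk.support_cons]
      by_cases ha : a ∈ w.support
      · right
        refine ⟨ha, ?_⟩
        have ha' : a ∈ ({e | e ∈ w.support} : Set _) := ha
        rw [hcons, Set.insert_eq_self.mpr ha']
      · left
        have ha' : a ∉ ({e | e ∈ w.support} : Set _) := ha
        rw [hcons, Set.ncard_insert_of_notMem ha' (Set.toFinite _)]
    rcases hz with hzx | hzy
    · -- z = x : walk x → y → z(=x) ++ w''
      subst hzx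
      refine ⟨c', .cons hadj (.cons hadj.symm w''), ?_, ?_⟩
      · rw [htarget]; ext u
        simp only [SimpleGraph.Walk.support_cons, List.mem_cons, Set.mem_setOf_eq]
        try tauto
      · have hsub1 : {u | u ∈ (SimpleGraph.Walk.cons hadj (.cons hadj.symm w'')).support}
            ⊆ insert y {u | u ∈ w''.support} := by
          intro u hu
          simp only [SimpleGraph.Walk.support_cons, List.mem_cons, Set.mem_setOf_eq] at hu ⊢
          rcases hu with rfl | rfl | hu
          · exact Or.inr hzmem
          · exact Or.inl rfl
          · exact Or.inr hu
        rcases hRHS with hR | ⟨ha, hR⟩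
        · calc {u | u ∈ (SimpleGraph.Walk.cons hadj (.cons hadj.symm w'')).support}.ncard
              ≤ (insert y {u | u ∈ w''.support}).ncard :=
                Set.ncard_le_ncard hsub1 (Set.toFinite _)
            _ ≤ {u | u ∈ w''.support}.ncard + 1 := Set.ncard_insert_le _ _
            _ ≤ ({e | e ∈ w.support}.ncard + 1) + 1 := by omega
            _ ≤ _ := by omega
        · -- a ∈ w.support : endpoints already in w''.support
          have hy' : y ∈ w''.support := by
            have : y ∈ {u | u ∈ w''.support} := by
              rw [hset]
              exact ⟨a, ha, by rw [← hspec]; simp⟩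
            exact this
          have hsub2 : {u | u ∈ (SimpleGraph.Walk.cons hadj (.cons hadj.symm w'')).support}
              ⊆ {u | u ∈ w''.support} := by
            intro u hu
            simp only [SimpleGraph.Walk.support_cons, List.mem_cons, Set.mem_setOf_eq] at hu ⊢
            rcases hu with rfl | rfl | hu
            · exact hzmem
            · exact hy'
            · exact hu
          calc {u | u ∈ (SimpleGraph.Walk.cons hadj (.cons hadj.symm w'')).support}.ncard
              ≤ {u | u ∈ w''.support}.ncard := Set.ncard_le_ncard hsub2 (Set.toFinite _)
            _ ≤ {e | e ∈ w.support}.ncard + 1 := hcard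
            _ ≤ _ := by omega
    · -- z = y : walk x → y(=z) ++ w''
      subst hzy
      refine ⟨c', .cons hadj w'', ?_, ?_⟩
      · rw [htarget]; ext u
        simp only [SimpleGraph.Walk.support_cons, List.mem_cons, Set.mem_setOf_eq]
        constructor
        · tauto
        · rintro (rfl | rfl | hu)
          · tauto
          · exact Or.inr hzmem
          · tauto
      · have hsub1 : {u | u ∈ (SimpleGraph.Walk.cons hadj w'').support}
            ⊆ insert x {u | u ∈ w''.support} := by
          intro u hu
          simp only [SimpleGraph.Walk.support_cons, List.mem_cons, Set.mem_setOf_eq] at hu ⊢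
          tauto
        rcases hRHS with hR | ⟨ha, hR⟩
        · calc {u | u ∈ (SimpleGraph.Walk.cons hadj w'').support}.ncard
              ≤ (insert x {u | u ∈ w''.support}).ncard :=
                Set.ncard_le_ncard hsub1 (Set.toFinite _)
            _ ≤ {u | u ∈ w''.support}.ncard + 1 := Set.ncard_insert_le _ _
            _ ≤ ({e | e ∈ w.support}.ncard + 1) + 1 := by omega
            _ ≤ _ := by omega
        · have hxmem : x ∈ w''.support := by
            have : x ∈ {u | u ∈ w''.support} := by
              rw [hset]
              exact ⟨a, ha, by rw [← hspec]; simp⟩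
            exact this
          have hsub2 : {u | u ∈ (SimpleGraph.Walk.cons hadj w'').support}
              ⊆ {u | u ∈ w''.support} := by
            intro u hu
            simp only [SimpleGraph.Walk.support_cons, List.mem_cons, Set.mem_setOf_eq] at hu ⊢
            rcases hu with rfl | hu
            · exact hxmem
            · exact hu
          calc {u | u ∈ (SimpleGraph.Walk.cons hadj w'').support}.ncard
              ≤ {u | u ∈ w''.support}.ncard := Set.ncard_le_ncard hsub2 (Set.toFinite _)
            _ ≤ {e | e ∈ w.support}.ncard + 1 := hcard
            _ ≤ _ := by omega

lemma walk_shadow (H : FGraph) : ∀ (k : ℕ), ∀ {a b : (lineIter k H).V}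
    (w : (lineIter k H).G.Walk a b),
    (⋃ v ∈ w.support, Sh k H v).ncard ≤ k + {v | v ∈ w.support}.ncard := by
  intro k
  induction k with
  | zero =>
    intro a b w
    have : (⋃ v ∈ w.support, Sh 0 H v) = {v | v ∈ w.support} := by
      ext u
      simp only [Set.mem_iUnion, exists_prop, Set.mem_setOf_eq]
      constructor
      · rintro ⟨v, hv, ht⟩
        have : u = v := ht
        rw [this]; exact hv
      · intro hu
        exact ⟨u, hu, rfl⟩
    rw [this, Nat.zero_add]
    exact le_refl _
  | succ k ih =>
    intro a b w
    have hx : (Quot.out ((toEdge a : (lineIter k H).G.edgeSet) : Sym2 (lineIter k H).V)).1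
        ∈ ((toEdge a : (lineIter k H).G.edgeSet) : Sym2 (lineIter k H).V) :=
      Sym2.out_fst_mem _
    obtain ⟨c, w', hset, hcard⟩ := lift_walk H k w _ hx
    have hkey : (⋃ v ∈ w.support, Sh (k+1) H v) = ⋃ u ∈ w'.support, Sh k H u := by
      ext t
      simp only [Set.mem_iUnion, exists_prop, sh_succ, Set.mem_setOf_eq]
      constructor
      · rintro ⟨v, hv, A, hA, ht⟩
        have : A ∈ {u | u ∈ w'.support} := by rw [hset]; exact ⟨v, hv, hA⟩
        exact ⟨A, this, ht⟩
      · rintro ⟨A, hA, ht⟩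
        have : A ∈ {u | ∃ e ∈ w.support, u ∈ (toEdge e : Sym2 _)} := by
          rw [← hset]; exact hA
        obtain ⟨v, hv, hAv⟩ := this
        exact ⟨v, hv, A, hAv, ht⟩
    rw [hkey]
    calc (⋃ u ∈ w'.support, Sh k H u).ncard ≤ k + {u | u ∈ w'.support}.ncard := ih w'
      _ ≤ k + ({v | v ∈ w.support}.ncard + 1) := by omega
      _ = (k + 1) + {v | v ∈ w.support}.ncard := by omega

/-- For any graph `H` and any vertex `v` of `L^(k)(H)`, the shadow of `v` contains at most
`k + 1` vertices of `H`. -/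
theorem shadow_card_le (H : FGraph) (k : ℕ) (v : (lineIter k H).V) :
    (Sh k H v).ncard ≤ k + 1 := by
  have h := walk_shadow H k (SimpleGraph.Walk.nil : (lineIter k H).G.Walk v v)
  have h1 : (⋃ u ∈ (SimpleGraph.Walk.nil : (lineIter k H).G.Walk v v).support, Sh k H u)
      = Sh k H v := by
    ext t; simp
  have h2 : {u | u ∈ (SimpleGraph.Walk.nil : (lineIter k H).G.Walk v v).support} = {v} := by
    ext t; simp
  rw [h1, h2] at h
  simpa using h
end

section
/- If v = {A, B} is a vertex of L^(t)(G) for t ≥ 1 with child A, then |Sh(v) \ Sh(A)| ≤ 1. -/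
lemma shadow_adj_diff (G : FGraph) : ∀ k : ℕ, ∀ A B : (lineIter k G).V,
    (lineIter k G).G.Adj A B → (Sh k G B \ Sh k G A).ncard ≤ 1 := by
  intro k
  induction k with
  | zero =>
    intro A B _
    have hsub : Sh 0 G B \ Sh 0 G A ⊆ {B} := by
      simp [Sh]
    calc (Sh 0 G B \ Sh 0 G A).ncard ≤ ({B} : Set G.V).ncard :=
          Set.ncard_le_ncard hsub (Set.toFinite _)
      _ = 1 := Set.ncard_singleton _
  | succ k ih =>
    intro A B h
    have h' : ((lineIter k G).G.lineGraph).Adj A B := h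
    replace h' := (SimpleGraph.lineGraph_adj_iff_exists (e₁ := (show (lineIter k G).G.edgeSet from A)) (e₂ := (show (lineIter k G).G.edgeSet from B))).mp h'
    obtain ⟨hne, C, hCA, hCB⟩ := h'
    set D := Sym2.Mem.other hCB with hD
    have hBeq : Sym2.mk C D = ((show (lineIter k G).G.edgeSet from B : _) : Sym2 (lineIter k G).V) := Sym2.other_spec hCB
    have hadj : (lineIter k G).G.Adj C D := by
      have := (show (lineIter k G).G.edgeSet from B).2
      rw [← hBeq] at this
      exact this
    have hsub : Sh (k+1) G B \ Sh (k+1) G A ⊆ Sh k G D \ Sh k G C := by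
      rintro x ⟨hxB, hxA⟩
      obtain ⟨E, hE, hxE⟩ := hxB
      have hxC : x ∉ Sh k G C := fun hc => hxA ⟨C, hCA, hc⟩
      rw [← hBeq] at hE
      rcases Sym2.mem_iff.mp hE with rfl | rfl
      · exact absurd hxE hxC
      · exact ⟨hxE, hxC⟩
    calc (Sh (k+1) G B \ Sh (k+1) G A).ncard ≤ (Sh k G D \ Sh k G C).ncard :=
          Set.ncard_le_ncard hsub (Set.toFinite _)
      _ ≤ 1 := ih C D hadj


/-- If `v` is a vertex of `L^(t)(G)` with `t ≥ 1` (so `v` is an unordered pair of vertices of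
`L^(t-1)(G)`) and `A` is a child of `v`, then `|Sh(v) \ Sh(A)| ≤ 1`. -/
theorem shadow_child_diff (G : FGraph) (k : ℕ) (v : (lineIter (k + 1) G).V)
    (A : (lineIter k G).V)
    (hA : A ∈ ((show (lineIter k G).G.edgeSet from v : _) : Sym2 (lineIter k G).V)) :
    (Sh (k + 1) G v \ Sh k G A).ncard ≤ 1 := by
  set B := Sym2.Mem.other hA with hB
  have hveq : Sym2.mk A B = ((show (lineIter k G).G.edgeSet from v : _) : Sym2 (lineIter k G).V) :=
    Sym2.other_spec hA
  have hadj : (lineIter k G).G.Adj A B := by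
    have := (show (lineIter k G).G.edgeSet from v).2
    rw [← hveq] at this
    exact this
  have hsub : Sh (k+1) G v \ Sh k G A ⊆ Sh k G B \ Sh k G A := by
    rintro x ⟨hxv, hxA⟩
    obtain ⟨E, hE, hxE⟩ := hxv
    rw [← hveq] at hE
    rcases Sym2.mem_iff.mp hE with rfl | rfl
    · exact absurd hxE hxA
    · exact ⟨hxE, hxA⟩
  calc (Sh (k+1) G v \ Sh k G A).ncard ≤ (Sh k G B \ Sh k G A).ncard :=
        Set.ncard_le_ncard hsub (Set.toFinite _)
    _ ≤ 1 := shadow_adj_diff G k A B hadj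
end

section
/- Let T_k ⊆ {0,…,2^k−1} be the set of integers whose binary digit sum is odd, and T̄_k = {0,…,2^k−1} \ T_k. Then for every 0 ≤ j < k, the j-th power sums agree: ∑_{x∈T_k} x^j = ∑_{x∈T̄_k} x^j. -/
/-- The odious numbers in `{0, …, 2^k - 1}`: those with an odd binary digit sum. -/
def odious (k : ℕ) : Finset ℕ :=
  (Finset.range (2 ^ k)).filter (fun x => Odd ((Nat.digits 2 x).sum))

/-- The evil numbers in `{0, …, 2^k - 1}`: those with an even binary digit sum. -/
def evil (k : ℕ) : Finset ℕ :=
  (Finset.range (2 ^ k)).filter (fun x => Even ((Nat.digits 2 x).sum))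

lemma digits_len_le {k x : ℕ} (hx : x < 2 ^ k) : (Nat.digits 2 x).length ≤ k := by
  rcases Nat.eq_zero_or_pos x with rfl | hx0
  · simp
  by_contra h
  push_neg at h
  have h1 := Nat.base_pow_length_digits_le 2 x one_lt_two hx0.ne'
  have h2 : 2 ^ (k + 1) ≤ 2 ^ (Nat.digits 2 x).length := Nat.pow_le_pow_right (by norm_num) h
  have : 2 ^ (k + 1) ≤ 2 * x := le_trans h2 h1
  omega

lemma digitSum_add_pow {k x : ℕ} (hx : x < 2 ^ k) :
    (Nat.digits 2 (x + 2 ^ k)).sum = (Nat.digits 2 x).sum + 1 := by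
  have hlen := digits_len_le hx
  have h := Nat.digits_append_zeroes_append_digits (b := 2) (k := k - (Nat.digits 2 x).length)
    (m := 1) (n := x) one_lt_two one_pos
  rw [Nat.add_sub_cancel' hlen] at h
  rw [show x + 2 ^ k = x + 2 ^ k * 1 by ring, ← h]
  simp [List.sum_append, List.sum_replicate]

/-- The signed power sum. -/
def S (k j : ℕ) : ℤ :=
  ∑ x ∈ Finset.range (2 ^ k), (-1 : ℤ) ^ (Nat.digits 2 x).sum * (x : ℤ) ^ j

lemma S_succ (k j : ℕ) :
    S (k + 1) j = ∑ x ∈ Finset.range (2 ^ k),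
      (-1 : ℤ) ^ (Nat.digits 2 x).sum * ((x : ℤ) ^ j - ((x : ℤ) + 2 ^ k) ^ j) := by
  have hsplit : (2 : ℕ) ^ (k + 1) = 2 ^ k + 2 ^ k := by ring
  rw [S, hsplit, Finset.range_add, Finset.sum_union (by
    simp [Finset.disjoint_left, Finset.mem_map]
    intro a ha b hb hab; omega)]
  rw [Finset.sum_map]
  simp only [Finset.sum_sub_distrib, mul_sub]
  congr 1
  rw [← Finset.sum_neg_distrib]
  apply Finset.sum_congr rfl
  intro x hx
  have hx' : x < 2 ^ k := Finset.mem_range.mp hx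
  simp only [addLeftEmbedding_apply]
  rw [show 2 ^ k + x = x + 2 ^ k by ring, digitSum_add_pow hx', pow_succ]
  push_cast
  ring

lemma S_eq_zero : ∀ k j : ℕ, j < k → S k j = 0 := by
  intro k
  induction k with
  | zero => intro j hj; omega
  | succ k ih =>
    intro j hj
    rw [S_succ]
    have : ∀ x ∈ Finset.range (2 ^ k),
        (-1 : ℤ) ^ (Nat.digits 2 x).sum * ((x : ℤ) ^ j - ((x : ℤ) + 2 ^ k) ^ j)
        = ∑ i ∈ Finset.range j, -((j.choose i : ℤ) * (2 ^ k) ^ (j - i) *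
            ((-1 : ℤ) ^ (Nat.digits 2 x).sum * (x : ℤ) ^ i)) := by
      intro x _
      have hb : ((x : ℤ) + 2 ^ k) ^ j = ∑ i ∈ Finset.range (j + 1),
          (x : ℤ) ^ i * ((2 : ℤ) ^ k) ^ (j - i) * (j.choose i : ℤ) :=
        add_pow _ _ _
      rw [hb, Finset.sum_range_succ]
      simp only [Nat.sub_self, pow_zero, mul_one, Nat.choose_self, Nat.cast_one]
      rw [show (x:ℤ)^j - ((∑ i ∈ Finset.range j,
          (x:ℤ)^i * ((2:ℤ)^k)^(j-i) * (j.choose i:ℤ)) + (x:ℤ)^j)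
        = -(∑ i ∈ Finset.range j, (x:ℤ)^i * ((2:ℤ)^k)^(j-i) * (j.choose i:ℤ)) by ring]
      rw [mul_neg, Finset.mul_sum, ← Finset.sum_neg_distrib]
      apply Finset.sum_congr rfl
      intro i _
      ring
    rw [Finset.sum_congr rfl this, Finset.sum_comm]
    apply Finset.sum_eq_zero
    intro i hi
    have hik : i < k := lt_of_lt_of_le (Finset.mem_range.mp hi) (by omega)
    have hSi := ih i hik
    rw [S] at hSi
    rw [Finset.sum_neg_distrib, ← Finset.mul_sum, hSi, mul_zero, neg_zero]

/-- Prouhet's solution of the Prouhet–Tarry–Escott problem: for every `j < k`, the `j`-th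
power sums of the odious and the evil numbers below `2^k` agree. -/
theorem prouhet_tarry_escott (k j : ℕ) (hj : j < k) :
    ∑ x ∈ odious k, x ^ j = ∑ x ∈ Finset.range (2 ^ k) \ odious k, x ^ j := by
  have hS := S_eq_zero k j hj
  rw [S] at hS
  have hsub : odious k ⊆ Finset.range (2 ^ k) := Finset.filter_subset _ _
  have hsplit : Finset.range (2 ^ k) = odious k ∪ (Finset.range (2 ^ k) \ odious k) :=
    (Finset.union_sdiff_of_subset hsub).symm
  rw [hsplit, Finset.sum_union (Finset.disjoint_sdiff)] at hS
  have h1 : ∑ x ∈ odious k, (-1 : ℤ) ^ (Nat.digits 2 x).sum * (x : ℤ) ^ j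
      = -∑ x ∈ odious k, (x : ℤ) ^ j := by
    rw [← Finset.sum_neg_distrib]
    apply Finset.sum_congr rfl
    intro x hx
    have : Odd ((Nat.digits 2 x).sum) := (Finset.mem_filter.mp hx).2
    rw [this.neg_one_pow]; ring
  have h2 : ∑ x ∈ Finset.range (2 ^ k) \ odious k, (-1 : ℤ) ^ (Nat.digits 2 x).sum * (x : ℤ) ^ j
      = ∑ x ∈ Finset.range (2 ^ k) \ odious k, (x : ℤ) ^ j := by
    apply Finset.sum_congr rfl
    intro x hx
    rcases Finset.mem_sdiff.mp hx with ⟨_, hno⟩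
    have : ¬ Odd ((Nat.digits 2 x).sum) := by
      intro h
      exact hno (Finset.mem_filter.mpr ⟨(Finset.mem_sdiff.mp hx).1, h⟩)
    rw [Nat.not_odd_iff_even] at this
    rw [this.neg_one_pow]; ring
  rw [h1, h2] at hS
  have : (∑ x ∈ odious k, (x : ℤ) ^ j) = ∑ x ∈ Finset.range (2 ^ k) \ odious k, (x : ℤ) ^ j := by
    linarith
  exact_mod_cast this
end

section
/- With T_k the odious and T̄_k the evil numbers in {0,…,2^k−1}, for all k ≥ 1 and j ≥ 0: |∑_{x∈T_k} x^{k+j} − ∑_{x∈T̄_k} x^{k+j}| ≤ (k+j)! · 2^{(k+j)(k+j+1)/2}. -/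
/-- Triangular numbers. -/
def tri : ℕ → ℕ
  | 0 => 0
  | (k + 1) => tri k + k

lemma tri_eq (k : ℕ) : 2 * tri k + k = k * k := by
  induction k with
  | zero => simp [tri]
  | succ k ih => simp only [tri]; ring_nf; ring_nf at ih; omega

/-- The exponent in the inductive bound. -/
def expo (k n : ℕ) : ℕ := (n - 1) + (k - 1) * (n - k) + tri k

/-- The signed power sum. -/
def sps (k n : ℕ) : ℤ :=
  ∑ x ∈ Finset.range (2 ^ k), (-1 : ℤ) ^ ((Nat.digits 2 x).sum) * (x : ℤ) ^ n

lemma sum_digits_two_pow_add (k : ℕ) : ∀ x < 2 ^ k,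
    (Nat.digits 2 (2 ^ k + x)).sum = (Nat.digits 2 x).sum + 1 := by
  induction k with
  | zero =>
    intro x hx
    interval_cases x
    simp
  | succ k ih =>
    intro x hx
    have hp : 0 < 2 ^ (k + 1) + x := by positivity
    rw [Nat.digits_def' (by norm_num : (1:ℕ) < 2) hp]
    have h2 : (2:ℕ) ^ (k + 1) = 2 ^ k + 2 ^ k := by rw [pow_succ]; ring
    have hdiv : (2 ^ (k + 1) + x) / 2 = 2 ^ k + x / 2 := by omega
    have hmod : (2 ^ (k + 1) + x) % 2 = x % 2 := by omega
    rw [List.sum_cons, hdiv, hmod, ih (x / 2) (by omega)]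
    rcases Nat.eq_zero_or_pos x with h0 | h0
    · subst h0; simp
    · rw [Nat.digits_def' (by norm_num : (1:ℕ) < 2) h0]
      simp [List.sum_cons]
      omega

lemma sps_succ (k n : ℕ) :
    sps (k + 1) n =
      -∑ m ∈ Finset.range n, (n.choose m : ℤ) * 2 ^ (k * (n - m)) * sps k m := by
  have h2 : (2:ℕ) ^ (k + 1) = 2 ^ k + 2 ^ k := by rw [pow_succ]; ring
  have hsplit : sps (k + 1) n = sps k n +
      ∑ x ∈ Finset.range (2 ^ k),
        (-1 : ℤ) ^ ((Nat.digits 2 (2 ^ k + x)).sum) * ((2 ^ k + x : ℕ) : ℤ) ^ n := by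
    unfold sps
    rw [h2, ← Finset.sum_range_add_sum_Ico _ (Nat.le_add_right (2^k) (2^k)),
      Finset.sum_Ico_eq_sum_range]
    simp
  have hterm : ∀ x ∈ Finset.range (2 ^ k),
      (-1 : ℤ) ^ ((Nat.digits 2 (2 ^ k + x)).sum) * ((2 ^ k + x : ℕ) : ℤ) ^ n =
      ∑ m ∈ Finset.range (n + 1),
        -(((-1 : ℤ) ^ ((Nat.digits 2 x).sum) * (x : ℤ) ^ m) *
          ((n.choose m : ℤ) * 2 ^ (k * (n - m)))) := by
    intro x hx
    rw [Finset.mem_range] at hx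
    rw [sum_digits_two_pow_add k x hx, pow_succ]
    have hxcast : ((2 ^ k + x : ℕ) : ℤ) = (x : ℤ) + 2 ^ k := by push_cast; ring
    rw [hxcast, add_pow, Finset.mul_sum]
    apply Finset.sum_congr rfl
    intro m hm
    rw [← pow_mul]
    ring
  rw [hsplit, Finset.sum_congr rfl hterm, Finset.sum_comm]
  have hswap : ∀ m ∈ Finset.range (n + 1),
      ∑ x ∈ Finset.range (2 ^ k),
        -(((-1 : ℤ) ^ ((Nat.digits 2 x).sum) * (x : ℤ) ^ m) *
          ((n.choose m : ℤ) * 2 ^ (k * (n - m)))) =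
      -((n.choose m : ℤ) * 2 ^ (k * (n - m)) * sps k m) := by
    intro m hm
    unfold sps
    rw [Finset.sum_neg_distrib, neg_inj, Finset.mul_sum]
    apply Finset.sum_congr rfl
    intro x hx
    ring
  rw [Finset.sum_congr rfl hswap, Finset.sum_range_succ]
  have hlast : -((n.choose n : ℤ) * 2 ^ (k * (n - n)) * sps k n) = -sps k n := by
    simp
  rw [hlast, ← Finset.sum_neg_distrib]
  ring

lemma sps_eq_zero (k : ℕ) : ∀ n < k, sps k n = 0 := by
  induction k with
  | zero => intro n hn; omega
  | succ k ih =>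
    intro n hn
    rw [sps_succ]
    rw [Finset.sum_eq_zero, neg_zero]
    intro m hm
    rw [Finset.mem_range] at hm
    rw [ih m (by omega)]
    ring

lemma expo_identity_A {k m n : ℕ} (hk : 1 ≤ k) (hkm : k ≤ m) (hmn : m ≤ n) :
    expo k m + (k * (n - m) + tri (k + 1)) = k * n + k - 1 := by
  have htri := tri_eq k
  have h1 : 1 ≤ m := le_trans hk hkm
  have h2 : 1 ≤ k * n + k := by nlinarith
  have h3 : tri (k + 1) = tri k + k := rfl
  unfold expo
  rw [h3]
  zify [h1, hk, hkm, hmn, h2]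
  have htri' : (2 : ℤ) * tri k + k = k * k := by exact_mod_cast htri
  linear_combination htri'

lemma expo_identity_B {k n : ℕ} (hk : 1 ≤ k) (hkn : k + 1 ≤ n) :
    expo (k + 1) n + tri (k + 1) = (k * n + k - 1) + (n - k) := by
  have htri := tri_eq k
  have h1 : 1 ≤ n := by omega
  have h2 : 1 ≤ k * n + k := by nlinarith
  have h3 : tri (k + 1) = tri k + k := rfl
  unfold expo
  rw [h3]
  zify [h1, hk, hkn, h2, (by omega : k ≤ n), (by omega : k + 1 - 1 = k),
    (by omega : k + 1 ≤ n)]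
  have htri' : (2 : ℤ) * tri k + k = k * k := by exact_mod_cast htri
  linear_combination htri'

lemma expo_le {k n : ℕ} (hk : 1 ≤ k) (hkn : k ≤ n) :
    expo k n ≤ n * (n + 1) / 2 := by
  have htri := tri_eq k
  rw [Nat.le_div_iff_mul_le (by norm_num : 0 < 2)]
  unfold expo
  have h1 : 1 ≤ n := le_trans hk hkn
  zify [h1, hk, hkn]
  have htri' : (2 : ℤ) * tri k + k = k * k := by exact_mod_cast htri
  nlinarith [sq_nonneg ((n : ℤ) - k), (by exact_mod_cast hkn : (k:ℤ) ≤ n),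
    (by exact_mod_cast hk : (1:ℤ) ≤ k)]

lemma sps_bound : ∀ k, 1 ≤ k → ∀ n, k ≤ n →
    |sps k n| ≤ (n.factorial : ℤ) * 2 ^ (expo k n) := by
  intro k hk
  induction k, hk using Nat.le_induction with
  | base =>
    intro n hn
    have : sps 1 n = 0 ^ n - 1 := by
      unfold sps
      rw [(by norm_num : (2:ℕ)^1 = 2), Finset.sum_range_succ, Finset.sum_range_one]
      norm_num
      ring
    rw [this, zero_pow (by omega : n ≠ 0)]
    rw [(by norm_num : |(0 : ℤ) - 1| = 1)]
    have : (1 : ℤ) ≤ n.factorial := by exact_mod_cast Nat.one_le_iff_ne_zero.mpr n.factorial_ne_zero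
    calc (1:ℤ) ≤ (n.factorial : ℤ) := this
    _ ≤ (n.factorial : ℤ) * 2 ^ (expo 1 n) := le_mul_of_one_le_right (by positivity) (one_le_pow₀ (by norm_num))
  | succ k hk ih =>
    intro n hn
    rw [sps_succ, abs_neg]
    -- multiply by 2 ^ tri (k+1)
    have hpos : (0:ℤ) < 2 ^ (tri (k + 1)) := by positivity
    rw [← mul_le_mul_iff_of_pos_right hpos]
    calc |∑ m ∈ Finset.range n, (n.choose m : ℤ) * 2 ^ (k * (n - m)) * sps k m| *
            2 ^ (tri (k + 1))
        ≤ (∑ m ∈ Finset.range n,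
            |(n.choose m : ℤ) * 2 ^ (k * (n - m)) * sps k m|) * 2 ^ (tri (k + 1)) := by
          apply mul_le_mul_of_nonneg_right (Finset.abs_sum_le_sum_abs _ _) (le_of_lt hpos)
      _ = ∑ m ∈ Finset.range n,
            |(n.choose m : ℤ) * 2 ^ (k * (n - m)) * sps k m| * 2 ^ (tri (k + 1)) := by
          rw [Finset.sum_mul]
      _ = ∑ m ∈ Finset.Ico 0 k,
              |(n.choose m : ℤ) * 2 ^ (k * (n - m)) * sps k m| * 2 ^ (tri (k + 1)) +
          ∑ m ∈ Finset.Ico k n,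
              |(n.choose m : ℤ) * 2 ^ (k * (n - m)) * sps k m| * 2 ^ (tri (k + 1)) := by
          rw [Finset.sum_Ico_consecutive _ (Nat.zero_le k) (by omega : k ≤ n),
            ← Finset.range_eq_Ico]
      _ ≤ 0 + (n - k) • ((n.factorial : ℤ) * 2 ^ (k * n + k - 1)) := by
          apply add_le_add
          · apply le_of_eq
            apply Finset.sum_eq_zero
            intro m hm
            rw [Finset.mem_Ico] at hm
            rw [sps_eq_zero k m hm.2]
            simp
          · have := Finset.sum_le_card_nsmul (Finset.Ico k n)
              (fun m => |(n.choose m : ℤ) * 2 ^ (k * (n - m)) * sps k m| * 2 ^ (tri (k + 1)))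
              ((n.factorial : ℤ) * 2 ^ (k * n + k - 1)) ?_
            · rwa [Nat.card_Ico] at this
            · intro m hm
              rw [Finset.mem_Ico] at hm
              rw [abs_mul, abs_mul]
              have hc : |(n.choose m : ℤ)| = n.choose m := abs_of_nonneg (by positivity)
              have hp : |(2:ℤ) ^ (k * (n - m))| = 2 ^ (k * (n - m)) := abs_of_nonneg (by positivity)
              rw [hc, hp]
              have hfm := ih m hm.1
              calc (n.choose m : ℤ) * 2 ^ (k * (n - m)) * |sps k m| * 2 ^ (tri (k + 1))
                  ≤ (n.choose m : ℤ) * 2 ^ (k * (n - m)) *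
                      ((m.factorial : ℤ) * 2 ^ (expo k m)) * 2 ^ (tri (k + 1)) := by
                    apply mul_le_mul_of_nonneg_right _ (by positivity)
                    apply mul_le_mul_of_nonneg_left hfm (by positivity)
                _ = ((n.choose m : ℤ) * m.factorial) *
                      2 ^ (expo k m + (k * (n - m) + tri (k + 1))) := by
                    rw [pow_add, pow_add]; ring
                _ ≤ (n.factorial : ℤ) * 2 ^ (k * n + k - 1) := by
                    rw [expo_identity_A hk hm.1 (le_of_lt hm.2)]
                    apply mul_le_mul_of_nonneg_right _ (by positivity)
                    have : n.choose m * m.factorial ≤ n.factorial := by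
                      calc n.choose m * m.factorial
                          ≤ n.choose m * m.factorial * (n-m).factorial :=
                            le_mul_of_one_le_right (Nat.zero_le _)
                              (Nat.one_le_iff_ne_zero.mpr (Nat.factorial_ne_zero _))
                        _ = n.factorial := Nat.choose_mul_factorial_mul_factorial (le_of_lt hm.2)
                    exact_mod_cast this
      _ ≤ ((n.factorial : ℤ) * 2 ^ (expo (k + 1) n)) * 2 ^ (tri (k + 1)) := by
          rw [zero_add, nsmul_eq_mul]
          have h1 : ((n - k : ℕ) : ℤ) ≤ 2 ^ (n - k) := by
            exact_mod_cast Nat.le_of_lt (Nat.lt_two_pow_self (n := n - k))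
          calc ((n - k : ℕ) : ℤ) * ((n.factorial : ℤ) * 2 ^ (k * n + k - 1))
              ≤ 2 ^ (n - k) * ((n.factorial : ℤ) * 2 ^ (k * n + k - 1)) := by
                apply mul_le_mul_of_nonneg_right h1 (by positivity)
            _ = (n.factorial : ℤ) * 2 ^ ((k * n + k - 1) + (n - k)) := by
                rw [pow_add]; ring
            _ = ((n.factorial : ℤ) * 2 ^ (expo (k + 1) n)) * 2 ^ (tri (k + 1)) := by
                rw [← expo_identity_B hk hn, pow_add]; ring

lemma sps_eq (k n : ℕ) :
    sps k n = (∑ x ∈ evil k, (x : ℤ) ^ n) - ∑ x ∈ odious k, (x : ℤ) ^ n := by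
  unfold sps evil odious
  rw [← Finset.sum_filter_add_sum_filter_not (Finset.range (2^k))
    (fun x => Even ((Nat.digits 2 x).sum))]
  have h1 : ∑ x ∈ (Finset.range (2^k)).filter (fun x => Even ((Nat.digits 2 x).sum)),
      (-1 : ℤ) ^ ((Nat.digits 2 x).sum) * (x : ℤ) ^ n =
      ∑ x ∈ (Finset.range (2^k)).filter (fun x => Even ((Nat.digits 2 x).sum)),
      (x : ℤ) ^ n := by
    apply Finset.sum_congr rfl
    intro x hx
    rw [Finset.mem_filter] at hx
    rw [Even.neg_one_pow hx.2, one_mul]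
  have h2 : ∑ x ∈ (Finset.range (2^k)).filter (fun x => ¬ Even ((Nat.digits 2 x).sum)),
      (-1 : ℤ) ^ ((Nat.digits 2 x).sum) * (x : ℤ) ^ n =
      -∑ x ∈ (Finset.range (2^k)).filter (fun x => Odd ((Nat.digits 2 x).sum)),
      (x : ℤ) ^ n := by
    rw [← Finset.sum_neg_distrib]
    apply Finset.sum_congr
    · congr 1
      ext x
      simp [Nat.not_even_iff_odd]
    · intro x hx
      rw [Finset.mem_filter, Nat.not_even_iff_odd.symm] at hx
      rw [Odd.neg_one_pow (Nat.not_even_iff_odd.symm.mpr hx.2), neg_one_mul]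
  rw [h1, h2]
  ring

/-- `|S_{k+j}(T_k) - S_{k+j}(T̄_k)| ≤ (k+j)! 2^((k+j)(k+j+1)/2)` for `k ≥ 1`, `j ≥ 0`. -/
theorem powerSum_diff_abs_le (k j : ℕ) (hk : 1 ≤ k) :
    |(∑ x ∈ odious k, (x : ℤ) ^ (k + j)) - ∑ x ∈ evil k, (x : ℤ) ^ (k + j)| ≤
      ((k + j).factorial : ℤ) * 2 ^ ((k + j) * (k + j + 1) / 2) := by
  have h1 : |(∑ x ∈ odious k, (x : ℤ) ^ (k + j)) - ∑ x ∈ evil k, (x : ℤ) ^ (k + j)| =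
      |sps k (k + j)| := by
    rw [sps_eq, abs_sub_comm]
  rw [h1]
  calc |sps k (k + j)| ≤ ((k + j).factorial : ℤ) * 2 ^ (expo k (k + j)) :=
        sps_bound k hk (k + j) (Nat.le_add_right k j)
    _ ≤ ((k + j).factorial : ℤ) * 2 ^ ((k + j) * (k + j + 1) / 2) := by
        apply mul_le_mul_of_nonneg_left _ (by positivity)
        apply pow_le_pow_right₀ (by norm_num)
        exact expo_le hk (Nat.le_add_right k j)
end

section
/- Let f be a polynomial of degree d ≥ k ≥ 1. Then there is a polynomial g of degree d − k such that for all t, ∑_{x∈T_k} f(x+t) − ∑_{x∈T̄_k} f(x+t) = g(t); moreover if C is the leading coefficient of f, the leading coefficient of g is (−1)^{k+1} C · binomial(d,k) · k! · 2^{k(k−1)/2}. -/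
open Polynomial

/-- Binary digit sum recursion. -/
lemma digitSum_rec (x : ℕ) :
    (Nat.digits 2 x).sum = x % 2 + (Nat.digits 2 (x / 2)).sum := by
  rcases Nat.eq_zero_or_pos x with h | h
  · simp [h]
  · rw [Nat.digits_def' (by norm_num : 1 < 2) h, List.sum_cons]

lemma digitSum_pow_add : ∀ k : ℕ, ∀ x < 2 ^ k,
    (Nat.digits 2 (2 ^ k + x)).sum = (Nat.digits 2 x).sum + 1 := by
  intro k
  induction k with
  | zero =>
    intro x hx
    interval_cases x
    simp
  | succ k ih =>
    intro x hx
    rw [digitSum_rec (2 ^ (k + 1) + x), digitSum_rec x]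
    have h1 : 2 ^ (k + 1) + x = x + 2 ^ k * 2 := by ring
    have h2 : (2 ^ (k + 1) + x) % 2 = x % 2 := by
      rw [h1, Nat.add_mul_mod_self_right]
    have h3 : (2 ^ (k + 1) + x) / 2 = 2 ^ k + x / 2 := by
      rw [h1, Nat.add_mul_div_right _ _ (by norm_num : 0 < 2), Nat.add_comm]
    have h4 : x / 2 < 2 ^ k := by
      rw [Nat.div_lt_iff_lt_mul (by norm_num : 0 < 2)]
      calc x < 2 ^ (k + 1) := hx
        _ = 2 ^ k * 2 := by ring
    rw [h2, h3, ih _ h4]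
    omega

/-- The shifted difference operator. -/
noncomputable def Dl (c : ℝ) (p : ℝ[X]) : ℝ[X] := p.comp (X + C c) - p

/-- Iterated difference operator with shifts `1, 2, 4, …, 2^(k-1)`. -/
noncomputable def Pol (f : ℝ[X]) : ℕ → ℝ[X]
  | 0 => f
  | k + 1 => Dl (2 ^ k) (Pol f k)

lemma Dl_spec (p : ℝ[X]) (c : ℝ) (hc : c ≠ 0) (hp : 1 ≤ p.natDegree) :
    (Dl c p).natDegree = p.natDegree - 1 ∧
      (Dl c p).leadingCoeff = p.natDegree * c * p.leadingCoeff := by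
  set n := p.natDegree with hn
  have hp0 : p ≠ 0 := fun h => by simp [hn, h] at hp
  have hcomp : (p.comp (X + C c)).natDegree = n := by
    rw [natDegree_comp, natDegree_X_add_C, mul_one]
  have hcoeffn : (p.comp (X + C c)).coeff n = p.coeff n := by
    have := leadingCoeff_comp (q := X + C c) (p := p) (by rw [natDegree_X_add_C]; norm_num)
    rw [leadingCoeff, hcomp] at this
    rw [this, (monic_X_add_C c).leadingCoeff, one_pow, mul_one, hn, coeff_natDegree]
  -- the crucial coefficient at n - 1
  have htaylor : p.comp (X + C c) = Polynomial.taylor c p := (taylor_apply c p).symm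
  have hhd : (Polynomial.hasseDeriv (n - 1) p).natDegree < 2 := by
    have := natDegree_hasseDeriv_le p (n - 1)
    omega
  have hkey : (p.comp (X + C c)).coeff (n - 1) = p.coeff (n - 1) + n * p.coeff n * c := by
    rw [htaylor, taylor_coeff, eval_eq_sum_range' hhd]
    rw [Finset.sum_range_succ, Finset.sum_range_one]
    rw [hasseDeriv_coeff, hasseDeriv_coeff]
    have e1 : 0 + (n - 1) = n - 1 := by omega
    have e2 : 1 + (n - 1) = n := by omega
    rw [e1, e2, Nat.choose_self]
    have e3 : n.choose (n - 1) = n := by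
      rw [Nat.choose_symm (show 1 ≤ n by omega), Nat.choose_one_right]
    rw [e3]
    push_cast
    ring
  have hDcoeff : (Dl c p).coeff (n - 1) = n * c * p.coeff n := by
    simp only [Dl, coeff_sub, hkey]
    ring
  have hCne : p.coeff n ≠ 0 := by
    rw [hn, coeff_natDegree]
    exact leadingCoeff_ne_zero.mpr hp0
  have hne : (Dl c p).coeff (n - 1) ≠ 0 := by
    rw [hDcoeff]
    have : (n : ℝ) ≠ 0 := by positivity
    exact mul_ne_zero (mul_ne_zero this hc) hCne
  have hle : (Dl c p).natDegree ≤ n - 1 := by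
    rw [natDegree_le_iff_coeff_eq_zero]
    intro m hm
    have hm' : n ≤ m := by omega
    rcases eq_or_lt_of_le hm' with h | h
    · simp only [Dl, coeff_sub, ← h, hcoeffn, sub_self]
    · simp only [Dl, coeff_sub]
      rw [coeff_eq_zero_of_natDegree_lt (by rw [hcomp]; exact h),
        coeff_eq_zero_of_natDegree_lt (by rw [← hn]; exact h), sub_self]
  have hdeg : (Dl c p).natDegree = n - 1 :=
    le_antisymm hle (le_natDegree_of_ne_zero hne)
  refine ⟨hdeg, ?_⟩
  rw [leadingCoeff, hdeg, hDcoeff, hn, coeff_natDegree]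

lemma Pol_spec (f : ℝ[X]) (d : ℕ) (hdeg : f.natDegree = d) :
    ∀ k ≤ d, (Pol f k).natDegree = d - k ∧
      (Pol f k).leadingCoeff =
        f.leadingCoeff * (d.descFactorial k) * 2 ^ (k * (k - 1) / 2) := by
  intro k
  induction k with
  | zero => intro _; simp [Pol, hdeg]
  | succ k ih =>
    intro hkd
    obtain ⟨h1, h2⟩ := ih (by omega)
    have hc : (2 : ℝ) ^ k ≠ 0 := by positivity
    have hp : 1 ≤ (Pol f k).natDegree := by omega
    obtain ⟨hd', hl'⟩ := Dl_spec (Pol f k) (2 ^ k) hc hp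
    constructor
    · show (Dl (2 ^ k) (Pol f k)).natDegree = d - (k + 1)
      rw [hd', h1]; omega
    · show (Dl (2 ^ k) (Pol f k)).leadingCoeff = _
      rw [hl', h2, h1, Nat.descFactorial_succ]
      have hexp : (k + 1) * (k + 1 - 1) / 2 = k * (k - 1) / 2 + k := by
        obtain ⟨m, hm⟩ : 2 ∣ k * (k - 1) := by
          rcases Nat.even_or_odd k with h | h
          · exact Dvd.dvd.mul_right h.two_dvd _
          · exact Dvd.dvd.mul_left (Nat.Odd.sub_odd h odd_one).two_dvd _
        obtain ⟨m', hm'⟩ : 2 ∣ (k + 1) * (k + 1 - 1) := by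
          rcases Nat.even_or_odd (k + 1) with h | h
          · exact Dvd.dvd.mul_right h.two_dvd _
          · exact Dvd.dvd.mul_left (Nat.Odd.sub_odd h odd_one).two_dvd _
        have : (k + 1) * (k + 1 - 1) = k * (k - 1) + 2 * k := by
          cases k with
          | zero => rfl
          | succ j => simp only [Nat.add_sub_cancel]; ring
        omega
      rw [hexp, pow_add]
      push_cast
      ring

lemma key_eval (f : ℝ[X]) :
    ∀ k : ℕ, ∀ t : ℝ,
      (∑ x ∈ Finset.range (2 ^ k),
        (-1 : ℝ) ^ ((Nat.digits 2 x).sum) * f.eval ((x : ℝ) + t)) =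
      (-1 : ℝ) ^ k * (Pol f k).eval t := by
  intro k
  induction k with
  | zero => intro t; simp [Pol]
  | succ k ih =>
    intro t
    have hsplit : (2 : ℕ) ^ (k + 1) = 2 ^ k + 2 ^ k := by ring
    rw [hsplit, Finset.sum_range_add]
    have h2 : ∀ x ∈ Finset.range (2 ^ k),
        (-1 : ℝ) ^ ((Nat.digits 2 (2 ^ k + x)).sum) *
          f.eval (((2 ^ k + x : ℕ) : ℝ) + t) =
        -((-1 : ℝ) ^ ((Nat.digits 2 x).sum) * f.eval ((x : ℝ) + (t + 2 ^ k))) := by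
      intro x hx
      rw [digitSum_pow_add k x (Finset.mem_range.mp hx), pow_succ]
      push_cast
      ring_nf
    rw [Finset.sum_congr rfl h2, Finset.sum_neg_distrib, ih t, ih (t + 2 ^ k)]
    show _ = (-1 : ℝ) ^ (k + 1) * (Dl (2 ^ k) (Pol f k)).eval t
    simp only [Dl, eval_sub, eval_comp, eval_add, eval_X, eval_C, pow_succ]
    ring

lemma odious_sub_evil (k : ℕ) (h : ℕ → ℝ) :
    (∑ x ∈ odious k, h x) - (∑ x ∈ evil k, h x) =
      -∑ x ∈ Finset.range (2 ^ k), (-1 : ℝ) ^ ((Nat.digits 2 x).sum) * h x := by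
  have hsplit :
      (∑ x ∈ Finset.range (2 ^ k), (-1 : ℝ) ^ ((Nat.digits 2 x).sum) * h x) =
      (∑ x ∈ odious k, (-1 : ℝ) ^ ((Nat.digits 2 x).sum) * h x) +
        (∑ x ∈ evil k, (-1 : ℝ) ^ ((Nat.digits 2 x).sum) * h x) := by
    rw [odious, evil]
    rw [show ((Finset.range (2 ^ k)).filter fun x => Even ((Nat.digits 2 x).sum)) =
        ((Finset.range (2 ^ k)).filter fun x => ¬ Odd ((Nat.digits 2 x).sum)) from by
      simp [Nat.not_odd_iff_even]]
    exact (Finset.sum_filter_add_sum_filter_not _ _ _).symm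
  have hod : (∑ x ∈ odious k, (-1 : ℝ) ^ ((Nat.digits 2 x).sum) * h x) =
      -∑ x ∈ odious k, h x := by
    rw [← Finset.sum_neg_distrib]
    refine Finset.sum_congr rfl fun x hx => ?_
    have : Odd ((Nat.digits 2 x).sum) := (Finset.mem_filter.mp hx).2
    rw [this.neg_one_pow]; ring
  have hev : (∑ x ∈ evil k, (-1 : ℝ) ^ ((Nat.digits 2 x).sum) * h x) =
      ∑ x ∈ evil k, h x := by
    refine Finset.sum_congr rfl fun x hx => ?_
    have : Even ((Nat.digits 2 x).sum) := (Finset.mem_filter.mp hx).2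
    rw [this.neg_one_pow]; ring
  rw [hsplit, hod, hev]
  ring

/-- For a polynomial `f` of degree `d ≥ k ≥ 1`, there is a polynomial `g` of degree `d - k`
with `∑_{x ∈ T_k} f(x+t) - ∑_{x ∈ T̄_k} f(x+t) = g(t)` for all `t`, whose leading coefficient
is `(-1)^(k+1) C binom(d,k) k! 2^(k(k-1)/2)`, where `C` is the leading coefficient of `f`. -/
theorem exists_poly_of_powerSum_diff (f : ℝ[X]) (d k : ℕ) (hk : 1 ≤ k) (hkd : k ≤ d)
    (hdeg : f.natDegree = d) :
    ∃ g : ℝ[X], g.natDegree = d - k ∧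
      (∀ t : ℝ,
        (∑ x ∈ odious k, f.eval ((x : ℝ) + t)) - (∑ x ∈ evil k, f.eval ((x : ℝ) + t)) =
          g.eval t) ∧
      g.leadingCoeff =
        (-1) ^ (k + 1) * f.leadingCoeff * (d.choose k) * (k.factorial : ℝ) *
          2 ^ (k * (k - 1) / 2) := by
  refine ⟨C ((-1 : ℝ) ^ (k + 1)) * Pol f k, ?_, ?_, ?_⟩
  · obtain ⟨h1, _⟩ := Pol_spec f d hdeg k hkd
    rw [natDegree_C_mul (by simp [pow_ne_zero]), h1]
  · intro t
    rw [odious_sub_evil k (fun x : ℕ => f.eval ((x : ℝ) + t)), key_eval f k t]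
    simp only [eval_mul, eval_C, pow_succ]
    ring
  · obtain ⟨_, h2⟩ := Pol_spec f d hdeg k hkd
    rw [leadingCoeff_mul, leadingCoeff_C, h2, Nat.descFactorial_eq_factorial_mul_choose]
    push_cast
    ring
end

section
/- For any polynomial f of degree d ≥ 2, the number of distinct values of ∑_{i} f(λ_i), as λ = (λ_1, λ_2, …) ranges over all integer partitions of n, is Ω(n^{2(d−2)/3}) as n → ∞. -/
open Polynomial Finset Filter Asymptotics

lemma poly_lb_ub (p : ℝ[X]) (hp : 0 < p.leadingCoeff) :
    ∃ X : ℝ, 1 ≤ X ∧ ∀ x : ℝ, X ≤ x →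
      p.leadingCoeff / 2 * x ^ p.natDegree ≤ p.eval x ∧
      |p.eval x| ≤ 2 * p.leadingCoeff * x ^ p.natDegree := by
  have h := (Polynomial.isEquivalent_atTop_lead p).isLittleO.def (c := 1/2) (by norm_num)
  rw [Filter.eventually_atTop] at h
  obtain ⟨X0, hX0⟩ := h
  refine ⟨max X0 1, le_max_right _ _, fun x hx => ?_⟩
  have hx1 : (1:ℝ) ≤ x := le_trans (le_max_right _ _) hx
  have hx0 : (0:ℝ) ≤ x := by linarith
  have h1 := hX0 x (le_trans (le_max_left _ _) hx)
  simp only [Pi.sub_apply, Real.norm_eq_abs] at h1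
  have hpow : 0 ≤ x ^ p.natDegree := pow_nonneg hx0 _
  have hL : 0 ≤ p.leadingCoeff * x ^ p.natDegree := mul_nonneg hp.le hpow
  rw [abs_of_nonneg hL] at h1
  have h2 := abs_le.1 h1
  constructor
  · nlinarith [h2.1]
  · rw [abs_le]
    constructor <;> nlinarith [h2.1, h2.2]

lemma poly_gap (p : ℝ[X]) (hd : 1 ≤ p.natDegree) (hp : 0 < p.leadingCoeff) :
    ∃ c : ℝ, 0 < c ∧ ∃ X : ℝ, 1 ≤ X ∧ ∀ x y : ℝ, X ≤ x → x + 1 ≤ y →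
      c * x ^ (p.natDegree - 1) ≤ p.eval y - p.eval x := by
  set q := derivative p with hq
  have hcoeff : q.coeff (p.natDegree - 1) = p.leadingCoeff * ((p.natDegree - 1 : ℕ) + 1 : ℝ) := by
    rw [hq, coeff_derivative, Nat.sub_add_cancel hd]; rfl
  have hqdeg : q.natDegree = p.natDegree - 1 := by
    apply natDegree_eq_of_le_of_coeff_ne_zero (natDegree_derivative_le p)
    rw [hcoeff]
    positivity
  have hqlc : 0 < q.leadingCoeff := by
    rw [leadingCoeff, hqdeg, hcoeff]
    positivity
  obtain ⟨X, hX1, hX⟩ := poly_lb_ub q hqlc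
  refine ⟨q.leadingCoeff / 2, by positivity, X, hX1, fun x y hx hxy => ?_⟩
  have hx0 : (0:ℝ) < x := by linarith
  -- mono on Ici X
  have hmono : StrictMonoOn (fun z => p.eval z) (Set.Ici X) := by
    apply strictMonoOn_of_deriv_pos (convex_Ici X) (p.continuous.continuousOn)
    · intro z hz
      rw [interior_Ici] at hz
      have hz' : X ≤ z := le_of_lt hz
      have := (hX z hz').1
      have hzpow : (0:ℝ) < z ^ q.natDegree := pow_pos (by linarith) _
      have : 0 < q.leadingCoeff / 2 * z ^ q.natDegree := by positivity
      rw [Polynomial.deriv]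
      calc (0:ℝ) < q.leadingCoeff / 2 * z ^ q.natDegree := this
        _ ≤ q.eval z := (hX z hz').1
  obtain ⟨ξ, hξ, hslope⟩ := exists_hasDerivAt_eq_slope (fun z => p.eval z) (fun z => q.eval z)
    (by linarith : x < x + 1) (p.continuous.continuousOn)
    (fun z _ => p.hasDerivAt z)
  have hstep : p.eval (x+1) - p.eval x = q.eval ξ := by
    rw [hslope]; ring
  have hξx : x ≤ ξ := le_of_lt hξ.1
  have hξX : X ≤ ξ := le_trans hx hξx
  have h1 : q.leadingCoeff / 2 * ξ ^ q.natDegree ≤ q.eval ξ := (hX ξ hξX).1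
  have h2 : x ^ q.natDegree ≤ ξ ^ q.natDegree := pow_le_pow_left₀ hx0.le hξx _
  have h3 : p.eval (x+1) ≤ p.eval y := by
    rcases eq_or_lt_of_le hxy with h | h
    · rw [h]
    · exact (hmono.monotoneOn) (by simp; linarith : x + 1 ∈ Set.Ici X)
        (by simp; linarith : y ∈ Set.Ici X) hxy
  rw [← hqdeg]
  nlinarith [mul_le_mul_of_nonneg_left h2 (by positivity : (0:ℝ) ≤ q.leadingCoeff / 2)]

lemma inj_core (p : ℝ[X]) (D : ℕ) (k : ℕ) (m : Fin k → ℕ) (c1 C2 X : ℝ)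
    (hC2 : 0 ≤ C2) (hX : 1 ≤ X)
    (hgap : ∀ x y : ℝ, X ≤ x → x + 1 ≤ y → c1 * x ^ D ≤ p.eval y - p.eval x)
    (hbd : ∀ x : ℝ, X ≤ x → |p.eval x| ≤ C2 * x ^ (D+1))
    (hmX : ∀ i, X ≤ (m i : ℝ))
    (hsep : ∀ i : Fin k, 2 * ∑ j ∈ Finset.univ.filter (fun j => i < j),
        C2 * (2 * (m j : ℝ)) ^ (D+1) < c1 * (m i : ℝ) ^ D)
    (a b : Fin k → ℕ)
    (ha : ∀ i, m i ≤ a i ∧ a i < 2 * m i) (hb : ∀ i, m i ≤ b i ∧ b i < 2 * m i)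
    (i₀ : Fin k) (hlt : a i₀ < b i₀) (hprev : ∀ j, j < i₀ → a j = b j)
    (hsum : ∑ i, p.eval (a i : ℝ) = ∑ i, p.eval (b i : ℝ)) : False := by
  set Df : Fin k → ℝ := fun j => p.eval (b j : ℝ) - p.eval (a j : ℝ) with hDf
  have htot : ∑ j, Df j = 0 := by
    simp only [hDf, Finset.sum_sub_distrib, hsum, sub_self]
  have hsplit := Finset.sum_filter_add_sum_filter_not Finset.univ (fun j => i₀ ≤ j) Df
  have hlow : ∑ j ∈ Finset.univ.filter (fun j => ¬ i₀ ≤ j), Df j = 0 := by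
    apply Finset.sum_eq_zero
    intro j hj
    simp only [Finset.mem_filter, not_le] at hj
    simp [hDf, hprev j hj.2]
  have hins : Finset.univ.filter (fun j => i₀ ≤ j)
      = insert i₀ (Finset.univ.filter (fun j => i₀ < j)) := by
    ext j
    simp [le_iff_lt_or_eq, eq_comm, or_comm]
  have hnotmem : i₀ ∉ Finset.univ.filter (fun j => i₀ < j) := by simp
  have hkey : Df i₀ = - ∑ j ∈ Finset.univ.filter (fun j => i₀ < j), Df j := by
    have h1 : Df i₀ + ∑ j ∈ Finset.univ.filter (fun j => i₀ < j), Df j = 0 := by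
      have := htot
      rw [← hsplit, hlow, add_zero, hins, Finset.sum_insert hnotmem] at this
      exact this
    linarith
  -- lower bound on Df i₀
  have hm0 : (0:ℝ) ≤ (m i₀ : ℝ) := Nat.cast_nonneg _
  have hXa : X ≤ (a i₀ : ℝ) := le_trans (hmX i₀) (by exact_mod_cast (ha i₀).1)
  have hab1 : (a i₀ : ℝ) + 1 ≤ (b i₀ : ℝ) := by exact_mod_cast hlt
  have hDlb : c1 * (m i₀ : ℝ) ^ D ≤ Df i₀ := by
    have h1 := hgap (a i₀ : ℝ) (b i₀ : ℝ) hXa hab1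
    have h2 : (m i₀ : ℝ) ^ D ≤ (a i₀ : ℝ) ^ D :=
      pow_le_pow_left₀ hm0 (by exact_mod_cast (ha i₀).1) _
    have hc1 : 0 ≤ c1 := by
      by_contra hc
      push_neg at hc
      have hp1 : (0:ℝ) < (m i₀:ℝ) ^ D := by
        have : (1:ℝ) ≤ (m i₀:ℝ) := le_trans hX (hmX i₀)
        positivity
      have := hsep i₀
      have hsum_nonneg : 0 ≤ ∑ j ∈ Finset.univ.filter (fun j => i₀ < j),
          C2 * (2 * (m j : ℝ)) ^ (D+1) := by
        apply Finset.sum_nonneg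
        intro j _
        have : (0:ℝ) ≤ (m j : ℝ) := Nat.cast_nonneg _
        positivity
      nlinarith
    calc c1 * (m i₀ : ℝ) ^ D ≤ c1 * (a i₀ : ℝ) ^ D := mul_le_mul_of_nonneg_left h2 hc1
      _ ≤ Df i₀ := h1
  -- upper bound
  have hub : |Df i₀| ≤ 2 * ∑ j ∈ Finset.univ.filter (fun j => i₀ < j),
      C2 * (2 * (m j : ℝ)) ^ (D+1) := by
    rw [hkey, abs_neg]
    calc |∑ j ∈ Finset.univ.filter (fun j => i₀ < j), Df j|
        ≤ ∑ j ∈ Finset.univ.filter (fun j => i₀ < j), |Df j| :=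
          Finset.abs_sum_le_sum_abs _ _
      _ ≤ ∑ j ∈ Finset.univ.filter (fun j => i₀ < j), 2 * (C2 * (2 * (m j : ℝ)) ^ (D+1)) := by
          apply Finset.sum_le_sum
          intro j _
          have hXa' : X ≤ (a j : ℝ) := le_trans (hmX j) (by exact_mod_cast (ha j).1)
          have hXb' : X ≤ (b j : ℝ) := le_trans (hmX j) (by exact_mod_cast (hb j).1)
          have h1 := hbd _ hXa'
          have h2 := hbd _ hXb'
          have ha2 : (a j : ℝ) ≤ 2 * (m j : ℝ) := by
            have := (ha j).2
            exact_mod_cast le_of_lt (by exact_mod_cast this)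
          have hb2 : (b j : ℝ) ≤ 2 * (m j : ℝ) := by
            have := (hb j).2
            exact_mod_cast le_of_lt (by exact_mod_cast this)
          have h0a : (0:ℝ) ≤ (a j : ℝ) := Nat.cast_nonneg _
          have h0b : (0:ℝ) ≤ (b j : ℝ) := Nat.cast_nonneg _
          have h3 : (a j : ℝ) ^ (D+1) ≤ (2 * (m j:ℝ)) ^ (D+1) := pow_le_pow_left₀ h0a ha2 _
          have h4 : (b j : ℝ) ^ (D+1) ≤ (2 * (m j:ℝ)) ^ (D+1) := pow_le_pow_left₀ h0b hb2 _
          have := abs_sub (p.eval (b j:ℝ)) (p.eval (a j:ℝ))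
          calc |Df j| ≤ |p.eval (b j:ℝ)| + |p.eval (a j:ℝ)| := abs_sub _ _
            _ ≤ C2 * (2 * (m j:ℝ)) ^ (D+1) + C2 * (2 * (m j:ℝ)) ^ (D+1) := by
                apply add_le_add
                · exact le_trans h2 (by nlinarith)
                · exact le_trans h1 (by nlinarith)
            _ = 2 * (C2 * (2 * (m j : ℝ)) ^ (D+1)) := by ring
      _ = 2 * ∑ j ∈ Finset.univ.filter (fun j => i₀ < j), C2 * (2 * (m j : ℝ)) ^ (D+1) := by
          rw [Finset.mul_sum]
  have := hsep i₀
  have habs : Df i₀ ≤ |Df i₀| := le_abs_self _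
  linarith

lemma inj_lemma (p : ℝ[X]) (D : ℕ) (k : ℕ) (m : Fin k → ℕ) (c1 C2 X : ℝ)
    (hC2 : 0 ≤ C2) (hX : 1 ≤ X)
    (hgap : ∀ x y : ℝ, X ≤ x → x + 1 ≤ y → c1 * x ^ D ≤ p.eval y - p.eval x)
    (hbd : ∀ x : ℝ, X ≤ x → |p.eval x| ≤ C2 * x ^ (D+1))
    (hmX : ∀ i, X ≤ (m i : ℝ))
    (hsep : ∀ i : Fin k, 2 * ∑ j ∈ Finset.univ.filter (fun j => i < j),
        C2 * (2 * (m j : ℝ)) ^ (D+1) < c1 * (m i : ℝ) ^ D) :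
    Set.InjOn (fun a : Fin k → ℕ => ∑ i, p.eval (a i : ℝ))
      (↑(Fintype.piFinset fun i => Finset.Ico (m i) (2 * m i))) := by
  intro a ha b hb hab
  simp only [Finset.coe_sort_coe, Finset.mem_coe, Fintype.mem_piFinset, Finset.mem_Ico] at ha hb
  by_contra hne
  have hs : (Finset.univ.filter (fun j => a j ≠ b j)).Nonempty := by
    rw [Finset.filter_nonempty_iff]
    by_contra h
    push_neg at h
    exact hne (funext fun j => h j (Finset.mem_univ j))
  set i₀ := (Finset.univ.filter (fun j => a j ≠ b j)).min' hs with hi₀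
  have hi₀mem := Finset.min'_mem _ hs
  rw [Finset.mem_filter] at hi₀mem
  have hprev : ∀ j, j < i₀ → a j = b j := by
    intro j hj
    by_contra hc
    have : i₀ ≤ j := Finset.min'_le _ _ (by simp [hc])
    exact absurd hj (not_lt.mpr this)
  rcases lt_or_gt_of_ne hi₀mem.2 with h | h
  · exact inj_core p D k m c1 C2 X hC2 hX hgap hbd hmX hsep a b ha hb i₀ h hprev hab
  · exact inj_core p D k m c1 C2 X hC2 hX hgap hbd hmX hsep b a hb ha i₀ h
      (fun j hj => (hprev j hj).symm) hab.symm

lemma bino (a b : ℕ) : ∀ n : ℕ, a^(n+1) + (n+1)*b*a^n ≤ (a+b)^(n+1) := by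
  intro n
  induction n with
  | zero => simp
  | succ n ih =>
    show a^(n+2) + (n+2)*b*a^(n+1) ≤ (a+b)^(n+2)
    have key : (a+b) * (a^(n+1) + (n+1)*b*a^n)
        = a^(n+2) + (n+2)*b*a^(n+1) + (n+1)*(b*(b*a^n)) := by ring
    calc a^(n+2) + (n+2)*b*a^(n+1)
        ≤ (a+b) * (a^(n+1) + (n+1)*b*a^n) := by rw [key]; exact Nat.le_add_right _ _
      _ ≤ (a+b) * (a+b)^(n+1) := Nat.mul_le_mul le_rfl ih
      _ = (a+b)^(n+2) := by ring

lemma geom (E D : ℕ) (hED : E + 3 = D) :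
    ∀ K : ℕ, 3 * (∑ i ∈ Finset.range K, E^i * D^(K-1-i)) + E^K = D^K := by
  subst hED
  intro K
  induction K with
  | zero => simp
  | succ K ih =>
    have hshift : ∑ i ∈ Finset.range (K+1), E^i * (E+3)^(K+1-1-i)
        = (E+3) * (∑ i ∈ Finset.range K, E^i * (E+3)^(K-1-i)) + E^K := by
      rw [Finset.sum_range_succ]
      have h1 : ∀ i ∈ Finset.range K, E^i * (E+3)^(K+1-1-i) = (E+3) * (E^i * (E+3)^(K-1-i)) := by
        intro i hi
        rw [Finset.mem_range] at hi
        have h2 : K + 1 - 1 - i = (K - 1 - i) + 1 := by omega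
        rw [h2, pow_succ]
        ring
      rw [Finset.sum_congr rfl h1, ← Finset.mul_sum]
      have h3 : K + 1 - 1 - K = 0 := by omega
      rw [h3, pow_zero, mul_one]
    rw [hshift, pow_succ, pow_succ, ← ih]
    ring

lemma e_anti (E D k : ℕ) (hED : E ≤ D) :
    ∀ i j : ℕ, i ≤ j → j ≤ k - 1 → E^j * D^(k-1-j) ≤ E^i * D^(k-1-i) := by
  intro i j hij hjk
  have h1 : k - 1 - i = (j - i) + (k - 1 - j) := by omega
  have h2 : E^j = E^i * E^(j-i) := by
    rw [← pow_add]
    congr 1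
    omega
  rw [h1, h2, pow_add]
  have h3 : E^(j-i) ≤ D^(j-i) := Nat.pow_le_pow_left hED _
  calc E^i * E^(j-i) * D^(k-1-j) ≤ E^i * D^(j-i) * D^(k-1-j) :=
        Nat.mul_le_mul (Nat.mul_le_mul le_rfl h3) le_rfl
    _ = E^i * (D^(j-i) * D^(k-1-j)) := by ring

lemma gap_exp (d k i : ℕ) (hd : 2 ≤ d) (hik : i + 1 ≤ k - 1) :
    d * ((2*d-3)^(i+1) * (2*d)^(k-1-(i+1))) + 1 ≤ (d-1) * ((2*d-3)^i * (2*d)^(k-1-i)) := by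
  obtain ⟨d', rfl⟩ : ∃ d', d = d' + 2 := ⟨d - 2, by omega⟩
  have hb1 : 2*(d'+2)-3 = 2*d'+1 := by omega
  have hb2 : 2*(d'+2) = 2*d'+4 := by omega
  have hb3 : d'+2-1 = d'+1 := by omega
  rw [hb1, hb2, hb3]
  have hexp : k-1-i = (k-1-(i+1)) + 1 := by omega
  rw [hexp, pow_succ, pow_succ]
  set u := (2*d'+1)^i with hu
  set v := (2*d'+4)^(k-1-(i+1)) with hv
  have hu1 : 1 ≤ u := Nat.one_le_pow _ _ (by omega)
  have hv1 : 1 ≤ v := Nat.one_le_pow _ _ (by omega)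
  have huv : 1 ≤ u * v := Nat.one_le_iff_ne_zero.mpr (by positivity)
  nlinarith [huv]

lemma Ek_bound (d : ℕ) (hd : 2 ≤ d) :
    (2*d-3)^(d^2) + 1 ≤ 4 * (2*d)^(d^2-1) := by
  obtain ⟨d', rfl⟩ : ∃ d', d = d' + 2 := ⟨d - 2, by omega⟩
  set E := 2*(d'+2)-3 with hE
  set k := (d'+2)^2 with hk
  have hkval : k = d'*d' + 4*d' + 4 := by rw [hk]; ring
  have hE' : E = 2*d'+1 := by omega
  have hk2 : 2 ≤ k := by omega
  have hb := bino E 3 (k-2)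
  have hkk : k - 2 + 1 = k - 1 := by omega
  rw [hkk] at hb
  have hE3 : E + 3 = 2*(d'+2) := by omega
  rw [hE3] at hb
  have hq : E^2 + 1 ≤ 4*E + 12*(k-1) := by
    have hk1 : k - 1 = d'*d' + 4*d' + 3 := by omega
    rw [hE', hk1]
    nlinarith
  have hsplit : E^k = E^(k-2) * E^2 := by
    have h : k - 2 + 2 = k := by omega
    rw [← pow_add, h]
  have hsplit2 : E^(k-1) = E^(k-2) * E := by
    rw [← pow_succ, hkk]
  have hEk2 : 1 ≤ E^(k-2) := Nat.one_le_pow _ _ (by omega)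
  calc E^k + 1 ≤ E^(k-2) * (E^2 + 1) := by rw [hsplit]; nlinarith
    _ ≤ E^(k-2) * (4*E + 12*(k-1)) := Nat.mul_le_mul le_rfl hq
    _ = 4 * (E^(k-2) * E + 3*(k-1)*E^(k-2)) := by ring
    _ = 4 * (E^(k-1) + (k-1)*3*E^(k-2)) := by rw [hsplit2]; ring
    _ ≤ 4 * (2*(d'+2))^(k-1) := Nat.mul_le_mul le_rfl hb

lemma multiset_coe_eq (M : Multiset ℕ) :
    (M : Multiset ℝ) = Multiset.map (fun i : ℕ => (i : ℝ)) M := by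
  show M.bind (fun a => pure ((a : ℕ) : ℝ)) = _
  simp [Multiset.bind_singleton]

lemma mem_value_set (f : ℝ[X]) (n k : ℕ) (a : Fin k → ℕ)
    (hpos : ∀ i, 1 ≤ a i) (hsum : ∑ i, a i ≤ n) :
    ∃ p : n.Partition, ((p.parts.map (fun i => f.eval (i : ℝ))).sum)
      = ∑ i, f.eval (a i : ℝ) + ((n - ∑ i, a i : ℕ) : ℝ) * f.eval 1 := by
  refine ⟨⟨(Finset.univ.val.map a) + Multiset.replicate (n - ∑ i, a i) 1, ?_, ?_⟩, ?_⟩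
  · intro i hi
    rw [Multiset.mem_add] at hi
    rcases hi with hi | hi
    · rw [Multiset.mem_map] at hi
      obtain ⟨j, _, rfl⟩ := hi
      exact hpos j
    · rw [Multiset.eq_of_mem_replicate hi]
      norm_num
  · rw [Multiset.sum_add, Multiset.sum_replicate, smul_eq_mul, mul_one]
    have h1 : (Finset.univ.val.map a).sum = ∑ i, a i := rfl
    rw [h1]
    omega
  · rw [show ∀ P : Multiset ℕ, (Multiset.map (fun i : ℝ => f.eval i) (P : Multiset ℝ)).sum
        = (Multiset.map (fun i : ℕ => f.eval (i:ℝ)) P).sum from fun P => by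
        rw [multiset_coe_eq, Multiset.map_map]; rfl]
    simp only [Multiset.map_add, Multiset.sum_add, Multiset.map_map, Multiset.map_replicate,
      Multiset.sum_replicate, Function.comp, smul_eq_mul, Nat.cast_one]
    congr 1
    exact nsmul_eq_mul _ _


set_option maxHeartbeats 2000000 in
/-- For any polynomial `f` of degree `d ≥ 2`, the number of distinct values of
`f(λ) = ∑_i f(λ_i)` over integer partitions `λ ⊢ n` is `Ω(n^(2(d-2)/3))` as `n → ∞`. -/
theorem card_poly_partition_values (f : ℝ[X]) (d : ℕ) (hd : 2 ≤ d) (hdeg : f.natDegree = d) :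
    ∃ c : ℝ, 0 < c ∧ ∃ N : ℕ, ∀ n ≥ N,
      c * (n : ℝ) ^ ((2 * ((d : ℝ) - 2)) / 3) ≤
        ({y : ℝ | ∃ p : n.Partition,
            y = (p.parts.map (fun i => f.eval (i : ℝ))).sum}.ncard : ℝ) := by
  classical
  -- the auxiliary polynomial g0 with g0(1) = 0
  set g0 : ℝ[X] := f - C (f.eval 1) * X with hg0def
  have hg0deg : g0.natDegree = d := by
    rw [hg0def]
    rw [natDegree_sub_eq_left_of_natDegree_lt, hdeg]
    calc (C (f.eval 1) * X).natDegree ≤ (C (f.eval 1)).natDegree + X.natDegree :=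
        natDegree_mul_le
      _ ≤ 1 := by simp
      _ < f.natDegree := by omega
  have hg0eval : ∀ x : ℝ, g0.eval x = f.eval x - f.eval 1 * x := by
    intro x; simp [hg0def]
  have hg0ne : g0 ≠ 0 := by
    intro h
    rw [h] at hg0deg
    simp at hg0deg
    omega
  -- sign normalization
  obtain ⟨h, hhdeg, hhl, ε, hε, heval⟩ :
      ∃ h : ℝ[X], h.natDegree = d ∧ 0 < h.leadingCoeff ∧
        ∃ ε : ℝ, (ε = 1 ∨ ε = -1) ∧ ∀ x : ℝ, g0.eval x = ε * h.eval x := by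
    rcases (leadingCoeff_ne_zero.mpr hg0ne).lt_or_gt with hneg | hpos
    · refine ⟨-g0, by simp [hg0deg], by simpa using hneg, -1, Or.inr rfl, fun x => by simp⟩
    · exact ⟨g0, hg0deg, hpos, 1, Or.inl rfl, fun x => by simp⟩
  have hε0 : ε ≠ 0 := by rcases hε with rfl | rfl <;> norm_num
  -- analytic estimates
  obtain ⟨c1, hc1, X1, hX11, hgap⟩ := poly_gap h (by omega) hhl
  obtain ⟨X2, hX21, hbd⟩ := poly_lb_ub h hhl
  set Dm : ℕ := d - 1 with hDm
  have hDm1 : Dm + 1 = d := by omega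
  set C2 : ℝ := 2 * h.leadingCoeff with hC2def
  have hC2 : 0 ≤ C2 := by positivity
  set X : ℝ := max X1 X2 with hXdef
  have hX1 : 1 ≤ X := le_trans hX11 (le_max_left _ _)
  have hgap' : ∀ x y : ℝ, X ≤ x → x + 1 ≤ y → c1 * x ^ Dm ≤ h.eval y - h.eval x := by
    intro x y hx hxy
    have := hgap x y (le_trans (le_max_left _ _) hx) hxy
    rwa [hhdeg, show d - 1 = Dm from rfl] at this
  have hbd' : ∀ x : ℝ, X ≤ x → |h.eval x| ≤ C2 * x ^ (Dm + 1) := by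
    intro x hx
    have := (hbd x (le_trans (le_max_right _ _) hx)).2
    rwa [hhdeg, ← hDm1] at this
  -- combinatorial constants
  set k : ℕ := d ^ 2 with hkdef
  have hk4 : 4 ≤ k := by rw [hkdef]; nlinarith
  set E : ℕ := 2 * d - 3 with hEdef
  set Dd : ℕ := 2 * d with hDddef
  have hE1 : 1 ≤ E := by omega
  have hED : E + 3 = Dd := by omega
  have hEDd : E ≤ Dd := by omega
  set e : ℕ → ℕ := fun i => E ^ i * Dd ^ (k - 1 - i) with hedef
  set Q : ℕ := Dd ^ (k - 1) with hQdef
  have hQ1 : 1 ≤ Q := Nat.one_le_pow _ _ (by omega)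
  have he1 : ∀ i, 1 ≤ e i := fun i =>
    Nat.one_le_iff_ne_zero.mpr (by positivity)
  have heanti : ∀ i j : ℕ, i ≤ j → j ≤ k - 1 → e j ≤ e i := fun i j hij hjk =>
    e_anti E Dd k hEDd i j hij hjk
  have he0 : e 0 = Q := by simp [hedef, hQdef]
  have hgapexp : ∀ i, i + 1 ≤ k - 1 → d * e (i + 1) + 1 ≤ (d - 1) * e i := by
    intro i hik
    exact gap_exp d k i hd hik
  set Sk : ℕ := ∑ i ∈ Finset.range k, e i with hSkdef
  have hSk : (2 * d - 4) * Q + 1 ≤ 3 * Sk := by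
    have h1 := geom E Dd hED k
    have h2 : E ^ k + 1 ≤ 4 * Q := by
      have := Ek_bound d hd
      rwa [← hkdef, ← hEdef, ← hDddef, ← hQdef] at this
    have h3 : Dd ^ k = Q * Dd := by
      rw [hQdef, ← pow_succ]
      congr 1
      omega
    have h4 : (2 * d - 4) * Q + 4 * Q = Q * Dd := by
      rw [← hDddef] at *
      have h5 : 2 * d - 4 + 4 = Dd := by omega
      calc (2 * d - 4) * Q + 4 * Q = (2 * d - 4 + 4) * Q := by ring
        _ = Dd * Q := by rw [h5]
        _ = Q * Dd := by ring
    rw [h3] at h1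
    have h1' : 3 * Sk + E ^ k = Q * Dd := by rw [hSkdef]; exact h1
    linarith [h1', h2, h4]
  -- thresholds
  set A : ℕ := 4 * k * 2 ^ Q with hAdef
  set β : ℝ := (2 * ((d : ℝ) - 2)) / 3 with hβdef
  have hd2 : (2:ℝ) ≤ (d:ℝ) := by exact_mod_cast hd
  have hβ0 : 0 ≤ β := by rw [hβdef]; linarith
  set T0 : ℕ := max (max (⌈X⌉₊ + 1) (⌈2 ^ (d+1) * C2 * k / c1⌉₊ + 1))
      (max (⌈((A:ℝ) ^ β) ^ 3⌉₊ + 1) 1) with hT0def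
  have hT01 : 1 ≤ T0 := le_trans (le_max_right _ _) (le_max_right _ _)
  refine ⟨1, one_pos, 4 * k * T0 ^ Q, fun n hn => ?_⟩
  set SS := {y : ℝ | ∃ p : n.Partition,
      y = (p.parts.map (fun i => f.eval (i : ℝ))).sum} with hSSdef
  set P : ℕ → Prop := fun u => 4 * k * u ^ Q ≤ n with hPdef
  set t : ℕ := Nat.findGreatest P n with htdef
  have hT0n : T0 ≤ n := by
    calc T0 ≤ T0 ^ Q := Nat.le_self_pow (by omega) _
      _ ≤ 4 * k * T0 ^ Q := Nat.le_mul_of_pos_left _ (by omega)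
      _ ≤ n := hn
  have hPT0 : P T0 := hn
  have htge : T0 ≤ t := Nat.le_findGreatest hT0n hPT0
  have ht1 : 1 ≤ t := le_trans hT01 htge
  have htP : P t := Nat.findGreatest_spec (Nat.zero_le n)
    (show P 0 by simp [hPdef, Nat.zero_pow (show 0 < Q by omega)])
  have htn : t < n := by
    have h2 : t ≤ t ^ Q := Nat.le_self_pow (by omega) _
    have h3 : 2 * t ^ Q ≤ 4 * k * t ^ Q := Nat.mul_le_mul (by omega) le_rfl
    have h4 : 4 * k * t ^ Q ≤ n := htP
    omega
  have hub : n < 4 * k * (t + 1) ^ Q := by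
    have h1 : ¬ P (t + 1) :=
      Nat.findGreatest_is_greatest (Nat.lt_succ_self t) (by omega)
    rw [hPdef] at h1
    exact Nat.lt_of_not_le h1
  set m : Fin k → ℕ := fun i => t ^ (e i.val) with hmdef
  set box := Fintype.piFinset (fun i : Fin k => Finset.Ico (m i) (2 * m i)) with hboxdef
  have hm1 : ∀ i, 1 ≤ m i := fun i => Nat.one_le_pow _ _ (by omega)
  have hTreal : (1:ℝ) ≤ (t:ℝ) := by exact_mod_cast ht1
  have htX : X ≤ (t : ℝ) := by
    have h1 : ⌈X⌉₊ ≤ t := by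
      have := le_trans (le_max_left _ _) htge
      omega
    calc X ≤ (⌈X⌉₊ : ℝ) := Nat.le_ceil _
      _ ≤ (t:ℝ) := by exact_mod_cast h1
  have hmX : ∀ i, X ≤ (m i : ℝ) := by
    intro i
    have h1 : t ≤ m i := by
      calc t = t ^ 1 := (pow_one t).symm
        _ ≤ t ^ (e i.val) := Nat.pow_le_pow_right ht1 (he1 _)
      ;
    exact le_trans htX (by exact_mod_cast h1)
  -- the separation bound
  have hc1t : 2 * (k:ℝ) * C2 * 2 ^ (Dm+1) < c1 * (t:ℝ) := by
    have h1 : (2:ℝ) ^ (d+1) * C2 * k / c1 < (T0:ℝ) := by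
      have hle : ⌈(2:ℝ) ^ (d+1) * C2 * k / c1⌉₊ + 1 ≤ T0 :=
        le_trans (le_max_right _ _) (le_max_left _ _)
      calc (2:ℝ)^(d+1)*C2*k/c1 ≤ (⌈(2:ℝ)^(d+1)*C2*k/c1⌉₊ : ℝ) := Nat.le_ceil _
        _ < (T0:ℝ) := by exact_mod_cast Nat.lt_of_lt_of_le (Nat.lt_succ_self _) hle
    have h2 : (2:ℝ)^(d+1)*C2*k < c1 * T0 := by
      rw [div_lt_iff₀ hc1] at h1
      linarith
    have h3 : (T0:ℝ) ≤ (t:ℝ) := by exact_mod_cast htge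
    have h4 : c1 * T0 ≤ c1 * t := by nlinarith
    have h5 : 2 * (k:ℝ) * C2 * 2 ^ (Dm+1) = 2^(d+1)*C2*k := by
      rw [hDm1, pow_succ]
      ring
    linarith
  have hsepmain : ∀ i : Fin k, 2 * ∑ j ∈ Finset.univ.filter (fun j => i < j),
      C2 * (2 * (m j : ℝ)) ^ (Dm+1) < c1 * (m i : ℝ) ^ Dm := by
    intro i
    by_cases hik : (i:ℕ) + 1 ≤ k - 1
    · set W : ℕ := (d-1) * e i.val - 1 with hWdef
      have hW1 : (d-1) * e i.val = W + 1 := by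
        have := hgapexp i.val hik
        omega
      have hterm : ∀ j ∈ Finset.univ.filter (fun j => i < j),
          C2 * (2 * (m j : ℝ))^(Dm+1) ≤ C2 * 2^(Dm+1) * (t:ℝ)^W := by
        intro j hj
        rw [Finset.mem_filter] at hj
        have hij : (i:ℕ) + 1 ≤ (j:ℕ) := hj.2
        have hjk : (j:ℕ) ≤ k - 1 := by have := j.isLt; omega
        have hej : e j.val * (Dm + 1) ≤ W := by
          rw [hDm1]
          have h6 : e j.val ≤ e ((i:ℕ)+1) := heanti _ _ hij hjk
          have h6' : e j.val * d ≤ e ((i:ℕ)+1) * d := Nat.mul_le_mul h6 le_rfl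
          have h7 := hgapexp (i:ℕ) hik
          have h7' : e ((i:ℕ)+1) * d + 1 ≤ (d-1) * e i.val := by
            rw [Nat.mul_comm]; exact h7
          linarith [hW1]
        have hmj : (m j : ℝ) = (t:ℝ) ^ (e j.val) := by
          rw [hmdef]; push_cast; ring
        rw [hmj, mul_pow, ← pow_mul]
        have h8 : (t:ℝ) ^ (e j.val * (Dm+1)) ≤ (t:ℝ)^W :=
          pow_le_pow_right₀ hTreal hej
        have h9 : (0:ℝ) ≤ 2 ^ (Dm+1) := by positivity
        calc C2 * ((2:ℝ)^(Dm+1) * (t:ℝ)^(e j.val * (Dm+1)))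
            ≤ C2 * ((2:ℝ)^(Dm+1) * (t:ℝ)^W) := by
              apply mul_le_mul_of_nonneg_left _ hC2
              exact mul_le_mul_of_nonneg_left h8 h9
          _ = C2 * 2^(Dm+1) * (t:ℝ)^W := by ring
      have hcardk : (Finset.univ.filter (fun j => i < j)).card ≤ k := by
        calc (Finset.univ.filter (fun j => i < j)).card ≤ (Finset.univ : Finset (Fin k)).card :=
            Finset.card_filter_le _ _
          _ = k := by simp
      have hBpos : (0:ℝ) ≤ C2 * 2^(Dm+1) * (t:ℝ)^W := by positivity
      have hsum2 : ∑ j ∈ Finset.univ.filter (fun j => i < j), C2 * (2*(m j:ℝ))^(Dm+1)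
          ≤ (k:ℝ) * (C2 * 2^(Dm+1) * (t:ℝ)^W) := by
        calc ∑ j ∈ Finset.univ.filter (fun j => i < j), C2 * (2*(m j:ℝ))^(Dm+1)
            ≤ (Finset.univ.filter (fun j => i < j)).card • (C2 * 2^(Dm+1) * (t:ℝ)^W) :=
              Finset.sum_le_card_nsmul _ _ _ hterm
          _ = ((Finset.univ.filter (fun j => i < j)).card : ℝ) * (C2 * 2^(Dm+1) * (t:ℝ)^W) :=
              nsmul_eq_mul _ _
          _ ≤ (k:ℝ) * (C2 * 2^(Dm+1) * (t:ℝ)^W) := by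
              apply mul_le_mul_of_nonneg_right _ hBpos
              exact_mod_cast hcardk
      have hrhs : c1 * (m i : ℝ)^Dm = c1 * (t:ℝ) * (t:ℝ)^W := by
        have hmi : (m i : ℝ) = (t:ℝ)^(e i.val) := by
          rw [hmdef]; push_cast; ring
        rw [hmi, ← pow_mul]
        have h10 : e i.val * Dm = W + 1 := by
          rw [hDm]
          rw [Nat.mul_comm]
          exact hW1
        rw [h10, pow_succ]
        ring
      rw [hrhs]
      have hTW : (0:ℝ) < (t:ℝ)^W := by positivity
      calc 2 * ∑ j ∈ Finset.univ.filter (fun j => i < j), C2 * (2*(m j:ℝ))^(Dm+1)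
          ≤ 2 * ((k:ℝ) * (C2 * 2^(Dm+1) * (t:ℝ)^W)) := by linarith
        _ = (2 * (k:ℝ) * C2 * 2^(Dm+1)) * (t:ℝ)^W := by ring
        _ < (c1 * (t:ℝ)) * (t:ℝ)^W := mul_lt_mul_of_pos_right hc1t hTW
        _ = c1 * (t:ℝ) * (t:ℝ)^W := by ring
    · have hempty : Finset.univ.filter (fun j => (i:Fin k) < j) = ∅ := by
        ext j
        simp only [Finset.mem_filter, Finset.mem_univ, true_and, Finset.notMem_empty, iff_false]
        intro hij
        have h1 : (i:ℕ) < (j:ℕ) := hij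
        have := j.isLt
        omega
      rw [hempty]
      simp only [Finset.sum_empty, mul_zero]
      have hmi1 : (1:ℝ) ≤ (m i : ℝ) := by exact_mod_cast hm1 i
      have : (0:ℝ) < (m i : ℝ)^Dm := by positivity
      positivity
  have hInj := inj_lemma h Dm k m c1 C2 X hC2 hX1 hgap' hbd' hmX hsepmain
  -- box members give partitions
  have hboxmem : ∀ a : Fin k → ℕ, a ∈ box → (∀ i, m i ≤ a i ∧ a i < 2 * m i) := by
    intro a ha i
    rw [hboxdef, Fintype.mem_piFinset] at ha
    have := ha i
    rw [Finset.mem_Ico] at this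
    exact this
  have hsumle : ∀ a : Fin k → ℕ, a ∈ box → ∑ i, a i ≤ n := by
    intro a ha
    have h1 : ∀ i : Fin k, a i ≤ 2 * t ^ Q := by
      intro i
      have h2 := (hboxmem a ha i).2
      have h3 : e i.val ≤ Q := by
        rw [← he0]
        exact heanti 0 i.val (Nat.zero_le _) (by have := i.isLt; omega)
      have h4 : m i ≤ t ^ Q := Nat.pow_le_pow_right ht1 h3
      omega
    calc ∑ i, a i ≤ ∑ _i : Fin k, 2 * t ^ Q := Finset.sum_le_sum (fun i _ => h1 i)
      _ = k * (2 * t ^ Q) := by rw [Finset.sum_const, Finset.card_univ, Fintype.card_fin, smul_eq_mul]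
      _ ≤ 4 * k * t ^ Q := by ring_nf; omega
      _ ≤ n := htP
  set F : (Fin k → ℕ) → ℝ := fun a =>
    ∑ i, f.eval ((a i : ℕ) : ℝ) + ((n - ∑ i, a i : ℕ) : ℝ) * f.eval 1 with hFdef
  have hpos : ∀ a : Fin k → ℕ, a ∈ box → ∀ i, 1 ≤ a i := by
    intro a ha i
    exact le_trans (hm1 i) (hboxmem a ha i).1
  have hmem : ∀ a : Fin k → ℕ, a ∈ box → F a ∈ SS := by
    intro a ha
    obtain ⟨p, hp⟩ := mem_value_set f n k a (hpos a ha) (hsumle a ha)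
    exact ⟨p, hp.symm⟩
  have hFeq : ∀ a : Fin k → ℕ, (∑ i, a i ≤ n) →
      F a = ε * (∑ i, h.eval ((a i : ℕ) : ℝ)) + (n:ℝ) * f.eval 1 := by
    intro a hs
    simp only [hFdef]
    have h1 : ∀ i : Fin k, f.eval ((a i : ℕ):ℝ) = ε * h.eval ((a i : ℕ):ℝ)
        + f.eval 1 * ((a i : ℕ):ℝ) := by
      intro i
      have h2 := hg0eval ((a i : ℕ):ℝ)
      have h3 := heval ((a i : ℕ):ℝ)
      linarith
    rw [Finset.sum_congr rfl (fun i _ => h1 i), Finset.sum_add_distrib,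
      ← Finset.mul_sum, ← Finset.mul_sum]
    have h3 : ((n - ∑ i, a i : ℕ):ℝ) = (n:ℝ) - ((∑ i, a i : ℕ):ℝ) := by
      exact Nat.cast_sub hs
    rw [h3]
    have h4 : ((∑ i, a i : ℕ):ℝ) = ∑ i, ((a i : ℕ):ℝ) := by push_cast; rfl
    rw [h4]
    ring
  have hFinj : Set.InjOn F ↑box := by
    intro a ha b hb hab
    have ha' : a ∈ box := ha
    have hb' : b ∈ box := hb
    rw [hFeq a (hsumle a ha'), hFeq b (hsumle b hb')] at hab
    have h1 : ∑ i, h.eval ((a i : ℕ):ℝ) = ∑ i, h.eval ((b i : ℕ):ℝ) :=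
      mul_left_cancel₀ hε0 (by linarith)
    exact hInj ha hb h1
  -- cardinality
  have hcard : box.card = t ^ Sk := by
    rw [hboxdef, Fintype.card_piFinset]
    have h1 : ∀ i : Fin k, (Finset.Ico (m i) (2 * m i)).card = m i := by
      intro i
      rw [Nat.card_Ico]
      omega
    rw [Finset.prod_congr rfl (fun i _ => h1 i)]
    calc ∏ i : Fin k, m i = ∏ i : Fin k, t ^ (e i.val) := rfl
      _ = t ^ (∑ i : Fin k, e i.val) := Finset.prod_pow_eq_pow_sum _ _ _
      _ = t ^ Sk := by
          congr 1
          rw [hSkdef, ← Fin.sum_univ_eq_sum_range]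
  have hfin : SS.Finite := by
    have hr : SS = Set.range (fun p : n.Partition =>
        (p.parts.map (fun i => f.eval (i : ℝ))).sum) := by
      ext y
      simp [hSSdef, eq_comm]
    rw [hr]
    exact Set.finite_range _
  have hchain : (t ^ Sk : ℕ) ≤ SS.ncard := by
    calc (t ^ Sk : ℕ) = box.card := hcard.symm
      _ = (↑box : Set (Fin k → ℕ)).ncard := (Set.ncard_coe_finset box).symm
      _ = (F '' ↑box).ncard := (Set.ncard_image_of_injOn hFinj).symm
      _ ≤ SS.ncard := by
          apply Set.ncard_le_ncard _ hfin
          intro y hy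
          obtain ⟨a, ha, rfl⟩ := hy
          exact hmem a ha
  -- final numeric estimate
  rw [one_mul]
  have hfinal : (n:ℝ) ^ β ≤ ((t ^ Sk : ℕ) : ℝ) := by
    have hnA : n ≤ A * t ^ Q := by
      have h1 : (t+1)^Q ≤ (2*t)^Q := Nat.pow_le_pow_left (by omega) _
      have h2 : (2*t)^Q = 2^Q * t^Q := mul_pow _ _ _
      calc n ≤ 4*k*(t+1)^Q := le_of_lt hub
        _ ≤ 4*k*(2^Q * t^Q) := by rw [← h2]; exact Nat.mul_le_mul le_rfl h1
        _ = A * t^Q := by rw [hAdef]; ring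
    have hnAr : (n:ℝ) ≤ (A:ℝ) * (t:ℝ)^Q := by exact_mod_cast hnA
    have ht0 : (0:ℝ) < (t:ℝ) := by linarith
    have step1 : (n:ℝ)^β ≤ ((A:ℝ) * (t:ℝ)^Q)^β :=
      Real.rpow_le_rpow (Nat.cast_nonneg n) hnAr hβ0
    have step2 : ((A:ℝ) * (t:ℝ)^Q)^β = (A:ℝ)^β * ((t:ℝ)^Q)^β :=
      Real.mul_rpow (Nat.cast_nonneg A) (by positivity)
    have step3 : ((t:ℝ)^(Q:ℕ))^β = (t:ℝ)^((Q:ℝ)*β) := by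
      rw [← Real.rpow_natCast (t:ℝ) Q, ← Real.rpow_mul (le_of_lt ht0)]
    have hexp : (Q:ℝ) * β ≤ (Sk:ℝ) - 1/3 := by
      have h1 : (((2*d-4)*Q + 1 : ℕ) : ℝ) ≤ ((3*Sk : ℕ) : ℝ) := by exact_mod_cast hSk
      push_cast [Nat.cast_sub (show (4:ℕ) ≤ 2*d by omega)] at h1
      rw [hβdef]
      nlinarith
    have step4 : (t:ℝ)^((Q:ℝ)*β) ≤ (t:ℝ)^((Sk:ℝ)-1/3) :=
      Real.rpow_le_rpow_of_exponent_le hTreal hexp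
    have hAβ0 : (0:ℝ) ≤ (A:ℝ)^β := Real.rpow_nonneg (Nat.cast_nonneg _) _
    have step5 : (A:ℝ)^β ≤ (t:ℝ)^(1/3:ℝ) := by
      have hA3 : ((A:ℝ)^β)^(3:ℕ) ≤ (t:ℝ) := by
        have hle : ⌈((A:ℝ)^β)^3⌉₊ + 1 ≤ T0 := le_trans (le_max_left _ _) (le_max_right _ _)
        calc ((A:ℝ)^β)^(3:ℕ) ≤ (⌈((A:ℝ)^β)^3⌉₊ : ℝ) := Nat.le_ceil _
          _ ≤ (T0:ℝ) := by exact_mod_cast le_trans (Nat.le_succ _) hle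
          _ ≤ (t:ℝ) := by exact_mod_cast htge
      have h13 : (0:ℝ) ≤ (t:ℝ)^(1/3:ℝ) := Real.rpow_nonneg (le_of_lt ht0) _
      have hcube : ((t:ℝ)^(1/3:ℝ))^(3:ℕ) = (t:ℝ) := by
        rw [← Real.rpow_natCast ((t:ℝ)^(1/3:ℝ)) 3, ← Real.rpow_mul (le_of_lt ht0)]
        norm_num
      have := pow_le_pow_left₀ hAβ0 (le_refl ((A:ℝ)^β)) 3
      by_contra hcon
      push_neg at hcon
      have h14 : ((t:ℝ)^(1/3:ℝ))^(3:ℕ) < ((A:ℝ)^β)^(3:ℕ) :=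
        pow_lt_pow_left₀ hcon h13 (by norm_num)
      rw [hcube] at h14
      linarith
    calc (n:ℝ)^β ≤ ((A:ℝ) * (t:ℝ)^Q)^β := step1
      _ = (A:ℝ)^β * ((t:ℝ)^Q)^β := step2
      _ = (A:ℝ)^β * (t:ℝ)^((Q:ℝ)*β) := by rw [step3]
      _ ≤ (A:ℝ)^β * (t:ℝ)^((Sk:ℝ)-1/3) := mul_le_mul_of_nonneg_left step4 hAβ0
      _ ≤ (t:ℝ)^(1/3:ℝ) * (t:ℝ)^((Sk:ℝ)-1/3) :=
          mul_le_mul_of_nonneg_right step5 (Real.rpow_nonneg (le_of_lt ht0) _)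
      _ = (t:ℝ)^((1/3:ℝ) + ((Sk:ℝ)-1/3)) := (Real.rpow_add ht0 _ _).symm
      _ = (t:ℝ)^((Sk:ℝ)) := by norm_num
      _ = ((t ^ Sk : ℕ) : ℝ) := by
          rw [Real.rpow_natCast]
          push_cast
          ring
  calc (n:ℝ) ^ β ≤ ((t ^ Sk : ℕ) : ℝ) := hfinal
    _ ≤ (SS.ncard : ℝ) := by exact_mod_cast hchain
end
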